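/- arXiv:1202.2142 — 3 statements merged into one kernel-verified Lean document; each statement's English description precedes it below -/
import Mathlib

section
/- For the strip P = {x ∈ ℝⁿ : |x₁| ≤ p} with p ≥ 0, one has ∫_P |x|₁ dλ_n(x) = n·(1 − e^{-p}) − p·e^{-p}; moreover λ_n(P) = 1 − e^{-p}, so this equals n − n·λ_n(Pᶜ) + λ_n(Pᶜ)·ln λ_n(Pᶜ), where Pᶜ = ℝⁿ \ P. -/
open MeasureTheory Real Set

/-- The standard exponential measure `λ_n` on `ℝⁿ`, with density
`2⁻ⁿ exp(-|x|₁)` with respect to Lebesgue measure. -/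
noncomputable def lamR (n : ℕ) : MeasureTheory.Measure (Fin n → ℝ) :=
  MeasureTheory.volume.withDensity fun x =>
    ENNReal.ofReal (((2 : ℝ) ^ n)⁻¹ * Real.exp (-(∑ i, |x i|)))

noncomputable def expD (t : ℝ) : ℝ := 2⁻¹ * Real.exp (-|t|)

lemma expD_nonneg (t : ℝ) : 0 ≤ expD t := by unfold expD; positivity

lemma expD_cont : Continuous expD := by unfold expD; continuity

lemma SME_integrable_comp_abs {f : ℝ → ℝ} (hf : IntegrableOn f (Ioi 0)) :
    Integrable (fun x => f |x|) := by
  have hf' : IntegrableOn (fun x => f |x|) (Ioi 0) :=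
    hf.congr_fun (fun x hx => by rw [abs_of_pos hx]) measurableSet_Ioi
  have int_Iic : IntegrableOn (fun x ↦ f |x|) (Iic 0) := by
    rw [← Measure.map_neg_eq_self (volume : Measure ℝ)]
    have m : MeasurableEmbedding fun x : ℝ => -x := (Homeomorph.neg ℝ).measurableEmbedding
    rw [m.integrableOn_map_iff]
    simp_rw [Function.comp_def, abs_neg, neg_preimage, neg_Iic, neg_zero]
    exact Iff.mpr integrableOn_Ici_iff_integrableOn_Ioi hf'
  have := int_Iic.union hf'
  rwa [Iic_union_Ioi, integrableOn_univ] at this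

lemma SME_intG : IntegrableOn (fun x : ℝ => 2⁻¹ * Real.exp (-x)) (Ioi 0) := by
  have h := (exp_neg_integrableOn_Ioi 0 one_pos).const_mul 2⁻¹
  simpa [neg_one_mul, IntegrableOn] using h

lemma SME_intH : IntegrableOn (fun x : ℝ => x * (2⁻¹ * Real.exp (-x))) (Ioi 0) := by
  have h : IntegrableOn (fun x : ℝ => 2⁻¹ * (Real.exp (-x) * x ^ ((2:ℝ) - 1))) (Ioi 0) :=
    (Real.GammaIntegral_convergent (s := 2) two_pos).const_mul 2⁻¹
  apply h.congr_fun ?_ measurableSet_Ioi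
  intro x _
  simp only [show (2:ℝ) - 1 = 1 by norm_num, Real.rpow_one]
  ring

lemma SME_intD : Integrable expD := by
  have := SME_integrable_comp_abs SME_intG
  exact this

lemma SME_intMD : Integrable (fun t => |t| * expD t) := by
  have := SME_integrable_comp_abs SME_intH
  exact this

lemma SME_ID : ∫ t, expD t = 1 := by
  have h := integral_comp_abs (f := fun s => 2⁻¹ * Real.exp (-s))
  have h2 : ∫ t, expD t = ∫ x : ℝ, 2⁻¹ * Real.exp (-|x|) := rfl
  rw [h2, h, MeasureTheory.integral_const_mul, integral_exp_neg_Ioi_zero]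
  norm_num

lemma SME_IMD : ∫ t, |t| * expD t = 1 := by
  have h := integral_comp_abs (f := fun s => s * (2⁻¹ * Real.exp (-s)))
  have h2 : ∫ t, |t| * expD t = ∫ x : ℝ, |x| * (2⁻¹ * Real.exp (-|x|)) := rfl
  rw [h2, h]
  have h3 : ∫ x in Ioi (0:ℝ), x * (2⁻¹ * Real.exp (-x))
      = 2⁻¹ * ∫ x in Ioi (0:ℝ), Real.exp (-x) * x ^ ((2:ℝ) - 1) := by
    rw [← MeasureTheory.integral_const_mul]
    refine setIntegral_congr_fun measurableSet_Ioi (fun x _ => ?_)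
    rw [show (2:ℝ) - 1 = 1 by norm_num, Real.rpow_one]
    ring
  rw [h3, ← Real.Gamma_eq_integral two_pos, Real.Gamma_two]
  norm_num

lemma SME_chi_mul (p : ℝ) (g : ℝ → ℝ) :
    (fun t => Set.indicator (Icc (-p) p) (fun _ => (1:ℝ)) t * g t)
      = Set.indicator (Icc (-p) p) g := by
  funext t
  by_cases ht : t ∈ Icc (-p) p <;> simp [ht]

lemma SME_ind_abs (p : ℝ) (G : ℝ → ℝ) :
    (fun t : ℝ => Set.indicator (Icc (-p) p) (fun s => G |s|) t)
      = fun x : ℝ => (Set.indicator (Icc 0 p) G) |x| := by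
  funext t
  by_cases h : |t| ≤ p
  · rw [Set.indicator_of_mem (by rw [mem_Icc, ← abs_le]; exact h),
      Set.indicator_of_mem (mem_Icc.2 ⟨abs_nonneg t, h⟩)]
  · rw [Set.indicator_of_notMem (by rw [mem_Icc, ← abs_le]; exact h),
      Set.indicator_of_notMem (by rw [mem_Icc]; exact fun hc => h hc.2)]

lemma SME_Ioi_inter (p : ℝ) : Ioi (0:ℝ) ∩ Icc 0 p = Ioc 0 p := by
  ext x
  simp only [mem_inter_iff, mem_Ioi, mem_Icc, mem_Ioc]
  exact ⟨fun ⟨h1, _, h2⟩ => ⟨h1, h2⟩, fun ⟨h1, h2⟩ => ⟨h1, le_of_lt h1, h2⟩⟩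

lemma SME_IchiD {p : ℝ} (hp : 0 ≤ p) :
    ∫ t, Set.indicator (Icc (-p) p) expD t = 1 - Real.exp (-p) := by
  have heq : (fun t => Set.indicator (Icc (-p) p) expD t)
      = fun x : ℝ => (Set.indicator (Icc 0 p) (fun s => 2⁻¹ * Real.exp (-s))) |x| :=
    SME_ind_abs p (fun s => 2⁻¹ * Real.exp (-s))
  rw [heq, integral_comp_abs, setIntegral_indicator measurableSet_Icc, SME_Ioi_inter p,
    ← intervalIntegral.integral_of_le hp, intervalIntegral.integral_const_mul]
  have h : ∫ x in (0:ℝ)..p, Real.exp (-x) = 1 - Real.exp (-p) := by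
    rw [intervalIntegral.integral_comp_neg (fun x => Real.exp x), integral_exp]
    simp
  rw [h]; ring

lemma SME_IchiMD {p : ℝ} (hp : 0 ≤ p) :
    ∫ t, Set.indicator (Icc (-p) p) (fun t => |t| * expD t) t
      = 1 - Real.exp (-p) - p * Real.exp (-p) := by
  have heq : (fun t => Set.indicator (Icc (-p) p) (fun t => |t| * expD t) t)
      = fun x : ℝ => (Set.indicator (Icc 0 p) (fun s => s * (2⁻¹ * Real.exp (-s)))) |x| :=
    SME_ind_abs p (fun s => s * (2⁻¹ * Real.exp (-s)))
  rw [heq, integral_comp_abs, setIntegral_indicator measurableSet_Icc, SME_Ioi_inter p,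
    ← intervalIntegral.integral_of_le hp]
  have h : ∫ x in (0:ℝ)..p, x * (2⁻¹ * Real.exp (-x))
      = 2⁻¹ * (1 - (p + 1) * Real.exp (-p)) := by
    have hder : ∀ x : ℝ, HasDerivAt (fun x : ℝ => 2⁻¹ * (-(x + 1) * Real.exp (-x)))
        (x * (2⁻¹ * Real.exp (-x))) x := by
      intro x
      have h1 : HasDerivAt (fun x : ℝ => Real.exp (-x)) (-Real.exp (-x)) x := by
        simpa [Function.comp_def] using (Real.hasDerivAt_exp (-x)).comp x (hasDerivAt_neg x)
      have h2 : HasDerivAt (fun x : ℝ => -(x + 1)) (-1) x := ((hasDerivAt_id x).add_const 1).neg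
      have h3 := (h2.mul h1).const_mul (2⁻¹ : ℝ)
      exact h3.congr_deriv (by ring)
    rw [intervalIntegral.integral_eq_sub_of_hasDerivAt (fun x _ => hder x)
      (Continuous.intervalIntegrable (by continuity) 0 p)]
    simp [Real.exp_zero]
    ring
  rw [h]; ring

/-- The first absolute moment of `λ_n` over the strip `P = {x : |x₁| ≤ p}`:
`∫_P |x|₁ dλ_n = n(1 - e^(-p)) - p·e^(-p)`; moreover `λ_n(P) = 1 - e^(-p)`, so
this equals `n - n·λ_n(Pᶜ) + λ_n(Pᶜ)·ln λ_n(Pᶜ)`. -/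
theorem strip_moment_eq
    (n : ℕ) (hn : 0 < n) (p : ℝ) (hp : 0 ≤ p) :
    (∫ x in {x : Fin n → ℝ | |x ⟨0, hn⟩| ≤ p}, ∑ i, |x i| ∂(lamR n) =
        n * (1 - Real.exp (-p)) - p * Real.exp (-p)) ∧
      lamR n {x : Fin n → ℝ | |x ⟨0, hn⟩| ≤ p} = ENNReal.ofReal (1 - Real.exp (-p)) ∧
      ∫ x in {x : Fin n → ℝ | |x ⟨0, hn⟩| ≤ p}, ∑ i, |x i| ∂(lamR n) =
        n - n * (lamR n {x : Fin n → ℝ | |x ⟨0, hn⟩| ≤ p}ᶜ).toReal +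
          (lamR n {x : Fin n → ℝ | |x ⟨0, hn⟩| ≤ p}ᶜ).toReal *
            Real.log (lamR n {x : Fin n → ℝ | |x ⟨0, hn⟩| ≤ p}ᶜ).toReal := by
  set i0 : Fin n := ⟨0, hn⟩ with hi0
  set P : Set (Fin n → ℝ) := {x : Fin n → ℝ | |x i0| ≤ p} with hPdef
  have hP : MeasurableSet P :=
    measurableSet_le ((measurable_pi_apply i0).abs) measurable_const
  have hmemP : ∀ x : Fin n → ℝ, x ∈ P ↔ x i0 ∈ Icc (-p) p := by
    intro x; rw [hPdef]; simp [mem_Icc, abs_le]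
  have hdens : ∀ x : Fin n → ℝ,
      ((2:ℝ)^n)⁻¹ * Real.exp (-(∑ i, |x i|)) = ∏ j, expD (x j) := by
    intro x
    have h1 : Real.exp (-(∑ i, |x i|)) = ∏ j, Real.exp (-|x j|) := by
      rw [← Real.exp_sum]
      congr 1
      rw [Finset.sum_neg_distrib]
    have h2 : ((2:ℝ)^n)⁻¹ = ∏ _j : Fin n, (2⁻¹:ℝ) := by
      simp [Finset.prod_const, inv_pow]
    rw [h1, h2, ← Finset.prod_mul_distrib]
    rfl
  have hprodnn : ∀ x : Fin n → ℝ, 0 ≤ ∏ j, expD (x j) :=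
    fun x => Finset.prod_nonneg fun j _ => expD_nonneg (x j)
  have hconv : ∀ g : (Fin n → ℝ) → ℝ,
      ∫ x, g x ∂(lamR n) = ∫ x, (∏ j, expD (x j)) * g x := by
    intro g
    have hmeas : Measurable fun x : Fin n → ℝ => Real.toNNReal (∏ j, expD (x j)) := by
      apply Measurable.real_toNNReal
      exact (Continuous.measurable
        (continuous_finset_prod _ fun j _ => expD_cont.comp (continuous_apply j)))
    have hfun : (fun x : Fin n → ℝ =>
        ENNReal.ofReal (((2:ℝ)^n)⁻¹ * Real.exp (-(∑ i, |x i|))))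
        = fun x => ((Real.toNNReal (∏ j, expD (x j)) : NNReal) : ENNReal) := by
      funext x; rw [ENNReal.ofReal, hdens x]
    rw [lamR, hfun, integral_withDensity_eq_integral_smul hmeas g]
    congr 1
    funext x
    rw [NNReal.smul_def, Real.coe_toNNReal _ (hprodnn x), smul_eq_mul]
  set χ : ℝ → ℝ := Set.indicator (Icc (-p) p) (fun _ => (1:ℝ)) with hχ
  set F : Fin n → Fin n → ℝ → ℝ :=
    fun i j t => (if j = i0 then χ t else 1) * ((if j = i then |t| else 1) * expD t) with hF
  have hchiD : (fun t => χ t * expD t) = Set.indicator (Icc (-p) p) expD := SME_chi_mul p expD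
  have hchiMD : (fun t => χ t * (|t| * expD t))
      = Set.indicator (Icc (-p) p) (fun t => |t| * expD t) :=
    SME_chi_mul p (fun t => |t| * expD t)
  have hFint : ∀ i j, Integrable (F i j) := by
    intro i j
    by_cases h1 : j = i0 <;> by_cases h2 : j = i
    · have h : F i j = fun t => χ t * (|t| * expD t) := by
        funext t; simp only [hF]; rw [if_pos h1, if_pos h2]
      rw [h, hchiMD]; exact SME_intMD.indicator measurableSet_Icc
    · have h : F i j = fun t => χ t * expD t := by
        funext t; simp only [hF]; rw [if_pos h1, if_neg h2, one_mul]
      rw [h, hchiD]; exact SME_intD.indicator measurableSet_Icc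
    · have h : F i j = fun t => |t| * expD t := by
        funext t; simp only [hF]; rw [if_neg h1, if_pos h2, one_mul]
      rw [h]; exact SME_intMD
    · have h : F i j = expD := by
        funext t; simp only [hF]; rw [if_neg h1, if_neg h2, one_mul, one_mul]
      rw [h]; exact SME_intD
  have hFval : ∀ i j, ∫ t, F i j t
      = if j = i0 then (if i = i0 then 1 - Real.exp (-p) - p * Real.exp (-p)
          else 1 - Real.exp (-p)) else 1 := by
    intro i j
    by_cases h1 : j = i0 <;> by_cases h2 : j = i
    · have hii : i = i0 := h2.symm.trans h1
      rw [if_pos h1, if_pos hii, ← SME_IchiMD hp, ← hchiMD]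
      congr 1; funext t; simp only [hF]; rw [if_pos h1, if_pos h2]
    · have hii : ¬ i = i0 := fun h => h2 (h1.trans h.symm)
      rw [if_pos h1, if_neg hii, ← SME_IchiD hp, ← hchiD]
      congr 1; funext t; simp only [hF]; rw [if_pos h1, if_neg h2, one_mul]
    · rw [if_neg h1, ← SME_IMD]
      congr 1; funext t; simp only [hF]; rw [if_neg h1, if_pos h2, one_mul]
    · rw [if_neg h1, ← SME_ID]
      congr 1; funext t; simp only [hF]; rw [if_neg h1, if_neg h2, one_mul, one_mul]
  have hprodF : ∀ (x : Fin n → ℝ) i,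
      (∏ j, F i j (x j)) = χ (x i0) * (|x i| * ∏ j, expD (x j)) := by
    intro x i
    simp only [hF]
    rw [show (∏ j, (if j = i0 then χ (x j) else 1) * ((if j = i then |x j| else 1) * expD (x j)))
        = (∏ j, if j = i0 then χ (x j) else 1) *
          ((∏ j, if j = i then |x j| else 1) * (∏ j, expD (x j))) from by
      rw [← Finset.prod_mul_distrib, ← Finset.prod_mul_distrib]]
    rw [Finset.prod_ite_eq' Finset.univ i0 (fun j => χ (x j)),
      Finset.prod_ite_eq' Finset.univ i (fun j => |x j|)]
    simp
  have hpt : ∀ x : Fin n → ℝ,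
      (∏ j, expD (x j)) * Set.indicator P (fun x => ∑ i, |x i|) x
        = ∑ i, ∏ j, F i j (x j) := by
    intro x
    by_cases hx : x ∈ P
    · rw [Set.indicator_of_mem hx]
      have hχ1 : χ (x i0) = 1 := Set.indicator_of_mem ((hmemP x).1 hx) _
      simp only [hprodF, hχ1, one_mul]
      rw [Finset.mul_sum]
      exact Finset.sum_congr rfl fun i _ => by ring
    · rw [Set.indicator_of_notMem hx, mul_zero]
      have hχ0 : χ (x i0) = 0 :=
        Set.indicator_of_notMem (fun h => hx ((hmemP x).2 h)) _
      simp [hprodF, hχ0]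
  have key1 : ∫ x in P, (∑ i, |x i|) ∂(lamR n)
      = (n:ℝ) * (1 - Real.exp (-p)) - p * Real.exp (-p) := by
    rw [← integral_indicator hP, hconv]
    rw [show (fun x : Fin n → ℝ =>
        (∏ j, expD (x j)) * Set.indicator P (fun x => ∑ i, |x i|) x)
        = fun x => ∑ i, ∏ j, F i j (x j) from funext hpt]
    rw [integral_finset_sum (μ := volume) _ (fun i _ =>
      (Integrable.fintype_prod (f := F i) (fun j => hFint i j) : Integrable _ volume))]
    have h2 : ∀ i : Fin n, (∫ x : Fin n → ℝ, ∏ j, F i j (x j))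
        = if i = i0 then 1 - Real.exp (-p) - p * Real.exp (-p) else 1 - Real.exp (-p) := by
      intro i
      rw [volume_pi, MeasureTheory.integral_fintype_prod_eq_prod (F i)]
      rw [Finset.prod_congr rfl (fun j _ => hFval i j)]
      rw [Finset.prod_ite_eq' Finset.univ i0
        (fun _ => if i = i0 then 1 - Real.exp (-p) - p * Real.exp (-p) else 1 - Real.exp (-p))]
      simp
    rw [Finset.sum_congr rfl (fun i _ => h2 i)]
    have h3 : ∀ i : Fin n,
        (if i = i0 then 1 - Real.exp (-p) - p * Real.exp (-p) else 1 - Real.exp (-p))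
          = (1 - Real.exp (-p)) + (if i = i0 then -(p * Real.exp (-p)) else 0) := by
      intro i; by_cases h : i = i0 <;> simp [h] <;> ring
    rw [Finset.sum_congr rfl (fun i _ => h3 i), Finset.sum_add_distrib, Finset.sum_const,
      Finset.card_univ, Fintype.card_fin,
      Finset.sum_ite_eq' Finset.univ i0 (fun _ => -(p * Real.exp (-p)))]
    simp only [Finset.mem_univ, if_true, nsmul_eq_mul]
    ring
  have key2 : lamR n P = ENNReal.ofReal (1 - Real.exp (-p)) := by
    rw [lamR, withDensity_apply _ hP]
    have hIntDens : Integrable (fun x : Fin n → ℝ => ∏ j, expD (x j)) :=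
      Integrable.fintype_prod (f := fun _ : Fin n => expD) (fun _ => SME_intD)
    have hIntOn : Integrable (fun x : Fin n → ℝ => ((2:ℝ)^n)⁻¹ * Real.exp (-(∑ i, |x i|)))
        (volume.restrict P) :=
      (hIntDens.integrableOn).congr_fun (fun x _ => (hdens x).symm) hP
    rw [← MeasureTheory.ofReal_integral_eq_lintegral_ofReal hIntOn
      (Filter.Eventually.of_forall (fun x => by positivity))]
    congr 1
    calc ∫ x in P, ((2:ℝ)^n)⁻¹ * Real.exp (-(∑ i, |x i|)) ∂volume
        = ∫ x in P, (∏ j, expD (x j)) ∂volume :=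
          setIntegral_congr_fun hP (fun x _ => hdens x)
      _ = ∫ x, Set.indicator P (fun x => ∏ j, expD (x j)) x := (integral_indicator hP).symm
      _ = ∫ x : Fin n → ℝ, ∏ j, ((if j = i0 then χ (x j) else 1) * expD (x j)) := by
          congr 1; funext x
          rw [Finset.prod_mul_distrib, Finset.prod_ite_eq' Finset.univ i0 (fun j => χ (x j))]
          by_cases hx : x ∈ P
          · have hχ1 : χ (x i0) = 1 := Set.indicator_of_mem ((hmemP x).1 hx) _
            rw [Set.indicator_of_mem hx]
            simp [hχ1]
          · have hχ0 : χ (x i0) = 0 :=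
              Set.indicator_of_notMem (fun h => hx ((hmemP x).2 h)) _
            rw [Set.indicator_of_notMem hx]
            simp [hχ0]
      _ = ∏ j : Fin n, ∫ t, (if j = i0 then χ t else 1) * expD t :=
          MeasureTheory.integral_fintype_prod_eq_prod
            (fun j t => (if j = i0 then χ t else 1) * expD t)
      _ = 1 - Real.exp (-p) := by
          have hj : ∀ j : Fin n, (∫ t, (if j = i0 then χ t else 1) * expD t)
              = if j = i0 then 1 - Real.exp (-p) else 1 := by
            intro j
            by_cases h : j = i0
            · simp only [if_pos h]
              rw [hchiD]
              exact SME_IchiD hp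
            · simp only [if_neg h, one_mul]; exact SME_ID
          rw [Finset.prod_congr rfl (fun j _ => hj j),
            Finset.prod_ite_eq' Finset.univ i0 (fun _ => 1 - Real.exp (-p))]
          simp
  have hmass : lamR n (univ : Set (Fin n → ℝ)) = 1 := by
    rw [lamR, withDensity_apply _ MeasurableSet.univ, Measure.restrict_univ]
    have hIntDens : Integrable (fun x : Fin n → ℝ => ∏ j, expD (x j)) :=
      Integrable.fintype_prod (f := fun _ : Fin n => expD) (fun _ => SME_intD)
    have hIntDens' : Integrable
        (fun x : Fin n → ℝ => ((2:ℝ)^n)⁻¹ * Real.exp (-(∑ i, |x i|))) := by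
      rwa [show (fun x : Fin n → ℝ => ((2:ℝ)^n)⁻¹ * Real.exp (-(∑ i, |x i|)))
        = fun x => ∏ j, expD (x j) from funext hdens]
    rw [← MeasureTheory.ofReal_integral_eq_lintegral_ofReal hIntDens'
      (Filter.Eventually.of_forall (fun x => by positivity))]
    rw [show (fun x : Fin n → ℝ => ((2:ℝ)^n)⁻¹ * Real.exp (-(∑ i, |x i|)))
      = fun x => ∏ j, expD (x j) from funext hdens]
    rw [volume_pi, MeasureTheory.integral_fintype_prod_eq_prod (fun _ => expD)]
    simp [SME_ID]
  have hexp_le : Real.exp (-p) ≤ 1 := by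
    calc Real.exp (-p) ≤ Real.exp 0 := Real.exp_le_exp.2 (neg_nonpos.2 hp)
      _ = 1 := Real.exp_zero
  have hcompl : lamR n Pᶜ = ENNReal.ofReal (Real.exp (-p)) := by
    rw [measure_compl hP (by rw [key2]; exact ENNReal.ofReal_ne_top), hmass, key2]
    rw [show (1:ENNReal) = ENNReal.ofReal 1 from by simp]
    rw [← ENNReal.ofReal_sub 1 (sub_nonneg.2 hexp_le)]
    congr 1; ring
  have htr : (lamR n Pᶜ).toReal = Real.exp (-p) := by
    rw [hcompl, ENNReal.toReal_ofReal (Real.exp_nonneg _)]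
  refine ⟨key1, key2, ?_⟩
  rw [key1, htr, Real.log_exp]
  ring
end

section
/- Let g : ℝⁿ → ℝ₊ be a bounded measurable function such that (1) g(ε₁x₁,…,εₙxₙ) = g(x) for all x ∈ ℝⁿ and ε₁,…,εₙ ∈ {−1,1}, and (2) for all x, y ∈ ℝⁿ, if |y_i| ≤ |x_i| for i = 1,…,n then g(y) ≤ g(x). Then Ent_{λ_n} g ≤ ∫_{ℝⁿ} g(x)·(|x|₁ − n) dλ_n(x). -/
open MeasureTheory Real Set
open scoped ENNReal

/-- Entropy of a nonnegative function `f` w.r.t. a measure `μ`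
(with the convention `0 · ln 0 = 0`, via `Real.log 0 = 0`). -/
noncomputable def entropy {X : Type*} [MeasurableSpace X] (μ : MeasureTheory.Measure X)
    (f : X → ℝ) : ℝ :=
  (∫ x, f x * Real.log (f x) ∂μ) - (∫ x, f x ∂μ) * Real.log (∫ x, f x ∂μ)

namespace EntropyExpAux

noncomputable def mu1 : Measure ℝ :=
  volume.withDensity fun x => ENNReal.ofReal ((2:ℝ)⁻¹ * Real.exp (-|x|))

lemma den_meas : Measurable fun x : ℝ => ENNReal.ofReal ((2:ℝ)⁻¹ * Real.exp (-|x|)) := by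
  fun_prop

lemma integrable_exp_neg_mul_abs {b : ℝ} (hb : 0 < b) :
    Integrable fun x : ℝ => Real.exp (-(b * |x|)) := by
  have hIoi : IntegrableOn (fun x : ℝ => Real.exp (-(b * |x|))) (Ioi 0) := by
    apply (exp_neg_integrableOn_Ioi 0 hb).congr_fun ?_ measurableSet_Ioi
    intro x hx
    simp [abs_of_pos (mem_Ioi.mp hx), neg_mul]
  rw [← integrableOn_univ, ← @Iio_union_Ici _ _ (0 : ℝ), integrableOn_union,
    integrableOn_Ici_iff_integrableOn_Ioi]
  refine ⟨?_, hIoi⟩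
  rw [← (Measure.measurePreserving_neg (volume : Measure ℝ)).integrableOn_comp_preimage
      (Homeomorph.neg ℝ).measurableEmbedding]
  simpa [Function.comp_def, abs_neg] using hIoi

lemma integrable_exp_neg_abs : Integrable fun x : ℝ => Real.exp (-|x|) := by
  simpa using integrable_exp_neg_mul_abs one_pos

lemma integrable_abs_mul_exp : Integrable fun x : ℝ => |x| * Real.exp (-|x|) := by
  apply Integrable.mono' ((integrable_exp_neg_mul_abs (b := 2⁻¹) (by norm_num)).const_mul 2)
  · exact (measurable_abs.mul ((measurable_abs.neg).exp)).aestronglyMeasurable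
  · filter_upwards with x
    rw [norm_eq_abs, abs_of_nonneg (by positivity)]
    have h1 : |x| ≤ 2 * Real.exp (2⁻¹ * |x|) := by
      nlinarith [Real.add_one_le_exp (2⁻¹ * |x|), abs_nonneg x, Real.exp_pos (2⁻¹ * |x|)]
    calc |x| * Real.exp (-|x|) ≤ (2 * Real.exp (2⁻¹ * |x|)) * Real.exp (-|x|) :=
          mul_le_mul_of_nonneg_right h1 (Real.exp_pos _).le
      _ = 2 * Real.exp (-(2⁻¹ * |x|)) := by
          rw [mul_assoc, ← Real.exp_add]; ring_nf

lemma tailSet_eq (s : ℝ) : {x : ℝ | s < |x|} = Iio (-s) ∪ Ioi s := by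
  ext x
  simp only [mem_setOf_eq, mem_union, mem_Iio, mem_Ioi, lt_abs, lt_neg]
  tauto

lemma tailSet_meas (s : ℝ) : MeasurableSet {x : ℝ | s < |x|} := by
  rw [tailSet_eq]; exact measurableSet_Iio.union measurableSet_Ioi

lemma integral_tail {s : ℝ} (hs : 0 ≤ s) :
    ∫ x in Iio (-s) ∪ Ioi s, (2:ℝ)⁻¹ * Real.exp (-|x|) = Real.exp (-s) := by
  have hint : Integrable fun x : ℝ => (2:ℝ)⁻¹ * Real.exp (-|x|) :=
    integrable_exp_neg_abs.const_mul _
  rw [setIntegral_union (((Iic_disjoint_Ioi (by linarith : -s ≤ s)).mono_left Iio_subset_Iic_self)) measurableSet_Ioi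
    hint.integrableOn hint.integrableOn]
  have h1 : ∫ x in Iio (-s), (2:ℝ)⁻¹ * Real.exp (-|x|) = 2⁻¹ * Real.exp (-s) := by
    rw [setIntegral_congr_set Iio_ae_eq_Iic]
    rw [setIntegral_congr_fun measurableSet_Iic (g := fun x => (2:ℝ)⁻¹ * Real.exp x) ?_]
    · rw [integral_const_mul, integral_exp_Iic]
    · intro x hx
      have hx0 : x ≤ 0 := le_trans (mem_Iic.mp hx) (by linarith)
      simp [abs_of_nonpos hx0]
  have h2 : ∫ x in Ioi s, (2:ℝ)⁻¹ * Real.exp (-|x|) = 2⁻¹ * Real.exp (-s) := by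
    rw [setIntegral_congr_fun measurableSet_Ioi (g := fun x => (2:ℝ)⁻¹ * Real.exp (-x)) ?_]
    · rw [integral_const_mul, integral_exp_neg_Ioi]
    · intro x hx
      have hx0 : 0 ≤ x := le_trans hs (le_of_lt (mem_Ioi.mp hx))
      simp [abs_of_nonneg hx0]
  rw [h1, h2]; ring

lemma mu1_tail {s : ℝ} (hs : 0 ≤ s) :
    mu1 {x : ℝ | s < |x|} = ENNReal.ofReal (Real.exp (-s)) := by
  rw [mu1, withDensity_apply _ (tailSet_meas s), tailSet_eq]
  rw [← ofReal_integral_eq_lintegral_ofReal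
    (integrable_exp_neg_abs.const_mul _).integrableOn
    (ae_of_all _ fun x => by positivity), integral_tail hs]

lemma mu1_singleton_zero : mu1 {(0:ℝ)} = 0 := by
  rw [mu1, withDensity_apply _ (measurableSet_singleton 0)]
  rw [Measure.restrict_eq_zero.mpr (measure_singleton 0), lintegral_zero_measure]

instance : IsProbabilityMeasure mu1 := by
  constructor
  have hU : (univ : Set ℝ) = {x : ℝ | 0 < |x|} ∪ {0} := by
    ext x
    simp only [mem_univ, true_iff, mem_union, mem_setOf_eq, abs_pos, mem_singleton_iff]
    tauto
  have h1 : mu1 univ ≤ ENNReal.ofReal (Real.exp (-0)) := by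
    rw [hU, ← mu1_tail le_rfl]
    exact le_trans (measure_union_le _ _) (by rw [mu1_singleton_zero, add_zero])
  have h2 : ENNReal.ofReal (Real.exp (-0)) ≤ mu1 univ := by
    rw [← mu1_tail le_rfl]; exact measure_mono (subset_univ _)
  rw [le_antisymm h1 h2]
  simp

lemma integrable_of_bdd {α : Type*} [MeasurableSpace α] {μ : Measure α} [IsFiniteMeasure μ]
    {f : α → ℝ} (hm : AEStronglyMeasurable f μ) {C : ℝ} (hC : ∀ x, |f x| ≤ C) :
    Integrable f μ :=
  Integrable.mono' (integrable_const C) hm (ae_of_all _ fun x => hC x)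

lemma integrable_abs_mu1 : Integrable (fun x : ℝ => |x|) mu1 := by
  rw [mu1, integrable_withDensity_iff den_meas (ae_of_all _ fun x => ENNReal.ofReal_lt_top)]
  have : (fun x : ℝ => |x| * (ENNReal.ofReal ((2:ℝ)⁻¹ * Real.exp (-|x|))).toReal)
      = fun x : ℝ => 2⁻¹ * (|x| * Real.exp (-|x|)) := by
    funext x; rw [ENNReal.toReal_ofReal (by positivity)]; ring
  rw [this]
  exact integrable_abs_mul_exp.const_mul _


/-- bound for `u * log u` on `[0, C]`. -/
lemma abs_mul_log_le {u C : ℝ} (h0 : 0 ≤ u) (hC : u ≤ C) :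
    |u * Real.log u| ≤ 1 + C * |Real.log C| := by
  have hC0 : 0 ≤ C := le_trans h0 hC
  rcases eq_or_lt_of_le h0 with h | hu
  · simp [← h]; positivity
  rcases le_or_gt u 1 with h1 | h1
  · have hlog : Real.log u ≤ 0 := Real.log_nonpos h0 h1
    have h2 : -(u * Real.log u) ≤ 1 := by
      have := Real.log_le_sub_one_of_pos (x := u⁻¹) (by positivity)
      rw [Real.log_inv] at this
      have h3 : -Real.log u ≤ u⁻¹ - 1 := this
      calc -(u * Real.log u) = u * (-Real.log u) := by ring
        _ ≤ u * (u⁻¹ - 1) := mul_le_mul_of_nonneg_left h3 h0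
        _ = 1 - u := by field_simp
        _ ≤ 1 := by linarith
    rw [abs_of_nonpos (mul_nonpos_of_nonneg_of_nonpos h0 hlog)]
    nlinarith [abs_nonneg (Real.log C), hC0]
  · have hClog : 0 ≤ Real.log C := Real.log_nonneg (le_trans h1.le hC)
    have hul : 0 ≤ Real.log u := Real.log_nonneg h1.le
    rw [abs_of_nonneg (by positivity)]
    have : u * Real.log u ≤ C * Real.log C :=
      mul_le_mul hC (Real.log_le_log (by positivity) hC) hul hC0
    calc u * Real.log u ≤ C * Real.log C := this
      _ ≤ C * |Real.log C| := by
          exact mul_le_mul_of_nonneg_left (le_abs_self _) hC0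
      _ ≤ 1 + C * |Real.log C| := by linarith

theorem one_dim (g : ℝ → ℝ) (hmeas : Measurable g) (h0 : ∀ x, 0 ≤ g x)
    {C : ℝ} (hC : ∀ x, g x ≤ C)
    (hmono : ∀ x y : ℝ, |y| ≤ |x| → g y ≤ g x) :
    entropy mu1 g ≤ ∫ x, g x * (|x| - 1) ∂mu1 := by
  -- integrability facts
  have hint_g : Integrable g mu1 :=
    integrable_of_bdd hmeas.aestronglyMeasurable (C := C)
      (fun x => by rw [abs_of_nonneg (h0 x)]; exact hC x)
  have hint_glog : Integrable (fun x => g x * Real.log (g x)) mu1 :=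
    integrable_of_bdd (hmeas.mul (Real.measurable_log.comp hmeas)).aestronglyMeasurable
      (C := 1 + C * |Real.log C|)
      (fun x => abs_mul_log_le (h0 x) (hC x))
  have hint_gabs : Integrable (fun x => g x * |x|) mu1 := by
    apply integrable_abs_mu1.bdd_mul hmeas.aestronglyMeasurable
    exact (ae_of_all _ fun x => by rw [norm_eq_abs, abs_of_nonneg (h0 x)]; exact hC x : ∀ᵐ x ∂mu1, ‖g x‖ ≤ C)
  set a := ∫ x, g x ∂mu1 with ha_def
  have ha0 : 0 ≤ a := integral_nonneg h0
  -- RHS reorganization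
  have hRHS : ∫ x, g x * (|x| - 1) ∂mu1 = (∫ x, g x * |x| ∂mu1) - a := by
    have : (fun x => g x * (|x| - 1)) = fun x => g x * |x| - g x := by
      funext x; ring
    rw [this, integral_sub hint_gabs hint_g]
  rcases eq_or_lt_of_le ha0 with ha | ha
  · -- a = 0 case
    have hg0 : g =ᵐ[mu1] 0 := by
      rw [← integral_eq_zero_iff_of_nonneg h0 hint_g]; exact ha.symm
    have h1 : ∫ x, g x * Real.log (g x) ∂mu1 = 0 := by
      rw [integral_congr_ae (g := fun _ => (0:ℝ)) ?_, integral_zero]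
      filter_upwards [hg0] with x hx; simp [hx]
    have h2 : ∫ x, g x * (|x| - 1) ∂mu1 = 0 := by
      rw [integral_congr_ae (g := fun _ => (0:ℝ)) ?_, integral_zero]
      filter_upwards [hg0] with x hx; simp [hx]
    rw [entropy, h1, ← ha_def, ← ha, h2]
    simp
  -- main case : 0 < a
  set A : ℝ → Set ℝ := fun s => {x : ℝ | s < |x|} with hA_def
  set R : ℝ → ℝ := fun s => ∫ x in A s, g x ∂mu1 with hR_def
  have hR_le_a : ∀ s, R s ≤ a :=
    fun s => setIntegral_le_integral hint_g (ae_of_all _ h0)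
  have hR_nonneg : ∀ s, 0 ≤ R s := fun s => setIntegral_nonneg (tailSet_meas s) (fun x _ => h0 x)
  have hR_anti : Antitone R := by
    intro s t hst
    apply setIntegral_mono_set hint_g.integrableOn (ae_of_all _ h0)
    apply HasSubset.Subset.eventuallyLE
    intro x hx
    exact lt_of_le_of_lt hst hx
  have hR_meas : Measurable R := hR_anti.measurable
  have key1 : ∀ x : ℝ, g x * Real.exp (-|x|) ≤ R |x| := by
    intro x
    have h1 := setIntegral_ge_of_const_le_real (c := g x) (tailSet_meas |x|)
      (measure_ne_top mu1 _) (fun u hu => hmono u x (le_of_lt hu)) hint_g.integrableOn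
    rw [measureReal_def, mu1_tail (abs_nonneg x), ENNReal.toReal_ofReal (Real.exp_pos _).le] at h1
    exact h1
  have hR0 : R 0 = a := by
    show ∫ x in A 0, g x ∂mu1 = a
    have hAe : A 0 =ᵐ[mu1] (univ : Set ℝ) := by
      rw [ae_eq_univ]
      have : (A 0)ᶜ = {(0:ℝ)} := by
        ext x; simp [hA_def, abs_pos, not_not]
      rw [this]; exact mu1_singleton_zero
    rw [setIntegral_congr_set hAe, setIntegral_univ]
  have hRtail : ∀ s, 0 ≤ s → R s ≤ C * Real.exp (-s) := by
    intro s hs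
    have h1 : R s ≤ ∫ _ in A s, C ∂mu1 := by
      apply setIntegral_mono_on hint_g.integrableOn ((integrableOn_const_iff).mpr ?_)
        (tailSet_meas s) (fun x _ => hC x)
      exact Or.inr (measure_lt_top _ _)
    rw [setIntegral_const, measureReal_def, mu1_tail hs, ENNReal.toReal_ofReal (Real.exp_pos _).le,
      smul_eq_mul, mul_comm] at h1
    exact h1
  have hCpos : 0 < C := by
    have : a ≤ C := by
      calc a ≤ ∫ _, C ∂mu1 := integral_mono hint_g (integrable_const C) hC
        _ = C := by simp
    linarith
  -- Lipschitz bound and continuity of R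
  have key2 : ∀ s t : ℝ, 0 ≤ s → s ≤ t → R s - R t ≤ C * (t - s) := by
    intro s t hs hst
    have hsub : A t ⊆ A s := fun x hx => lt_of_le_of_lt hst hx
    have hdiff : R s - R t = ∫ x in A s \ A t, g x ∂mu1 := by
      rw [integral_diff (tailSet_meas t) hint_g.integrableOn hsub]
    have hb : ∫ x in A s \ A t, g x ∂mu1 ≤ C * (mu1 (A s \ A t)).toReal := by
      have h1 : ∫ x in A s \ A t, g x ∂mu1 ≤ ∫ _ in A s \ A t, C ∂mu1 := by
        apply setIntegral_mono_on hint_g.integrableOn ((integrableOn_const_iff).mpr ?_)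
          ((tailSet_meas s).diff (tailSet_meas t)) (fun x _ => hC x)
        exact Or.inr (measure_lt_top _ _)
      rw [setIntegral_const, smul_eq_mul, mul_comm] at h1
      exact h1
    have hmeasd : mu1 (A s \ A t) = ENNReal.ofReal (Real.exp (-s) - Real.exp (-t)) := by
      rw [measure_diff hsub (tailSet_meas t).nullMeasurableSet (measure_ne_top _ _),
        mu1_tail hs, mu1_tail (le_trans hs hst),
        ← ENNReal.ofReal_sub _ (Real.exp_pos _).le]
    have hexp : Real.exp (-s) - Real.exp (-t) ≤ t - s := by
      have h2 : Real.exp (-s) - Real.exp (-t) = Real.exp (-s) * (1 - Real.exp (-(t - s))) := by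
        rw [mul_sub, mul_one, ← Real.exp_add]; ring_nf
      have h3 : Real.exp (-s) ≤ 1 := Real.exp_le_one_iff.mpr (by linarith)
      have h4 : 1 - Real.exp (-(t - s)) ≤ t - s := by
        nlinarith [Real.add_one_le_exp (-(t - s))]
      nlinarith [Real.exp_pos (-(t-s)), sub_nonneg.mpr hst, Real.exp_pos (-s)]
    calc R s - R t ≤ C * (mu1 (A s \ A t)).toReal := hdiff ▸ hb
      _ = C * (Real.exp (-s) - Real.exp (-t)) := by
          rw [hmeasd, ENNReal.toReal_ofReal (by nlinarith [Real.exp_le_exp.mpr (neg_le_neg hst)])]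
      _ ≤ C * (t - s) := mul_le_mul_of_nonneg_left hexp hCpos.le
  have hRcont : ContinuousOn R (Ici 0) := by
    apply LipschitzOnWith.continuousOn (K := ⟨C, hCpos.le⟩)
    apply LipschitzOnWith.of_dist_le_mul
    intro x hx y hy
    rcases le_total x y with hxy | hxy
    · rw [Real.dist_eq, Real.dist_eq, abs_of_nonneg (sub_nonneg.mpr (hR_anti hxy)),
        abs_of_nonpos (by linarith)]
      have := key2 x y hx hxy
      show _ ≤ C * _
      linarith
    · rw [Real.dist_eq, Real.dist_eq, abs_of_nonpos (sub_nonpos.mpr (hR_anti hxy)),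
        abs_of_nonneg (by linarith)]
      have := key2 y x hy hxy
      show _ ≤ C * _
      linarith
  have hIVT : ∀ c : ℝ, 0 < c → c < a → ∃ s, 0 ≤ s ∧ R s = c := by
    intro c hc hca
    set S : ℝ := Real.log (C / c) + 1 with hS_def
    have hCc : 1 < C / c := (one_lt_div hc).mpr (lt_of_lt_of_le hca (by
      calc a ≤ ∫ _, C ∂mu1 := integral_mono hint_g (integrable_const C) hC
        _ = C := by simp))
    have hS0 : 0 ≤ S := by
      rw [hS_def]
      linarith [Real.log_pos hCc]
    have hRS : R S < c := by
      have h1 : R S ≤ C * Real.exp (-S) := hRtail S hS0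
      have h2 : C * Real.exp (-S) < c := by
        rw [hS_def]
        rw [neg_add, Real.exp_add, ← Real.log_inv, Real.exp_log (by positivity)]
        have he : Real.exp (-1) < 1 := Real.exp_lt_one_iff.mpr (by norm_num)
        calc C * ((C / c)⁻¹ * Real.exp (-1)) = c * Real.exp (-1) := by
              field_simp
          _ < c := by nlinarith
      linarith
    have hmem : c ∈ Icc (R S) (R 0) := ⟨hRS.le, by rw [hR0]; exact hca.le⟩
    have := intermediate_value_Icc' hS0 (hRcont.mono (fun u hu => mem_Ici.mpr hu.1))
    obtain ⟨s, hs, hRs⟩ := this hmem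
    exact ⟨s, hs.1, hRs⟩
  -- entropy rewriting
  have hlogpos : ∀ x, 0 < g x → 0 < R |x| :=
    fun x hx => lt_of_lt_of_le (by positivity) (key1 x)
  have hEnt : entropy mu1 g = ∫ x, g x * (Real.log (g x) - Real.log a) ∂mu1 := by
    rw [entropy, ← ha_def]
    have h1 : (fun x => g x * (Real.log (g x) - Real.log a))
        = fun x => g x * Real.log (g x) - g x * Real.log a := by
      funext x; ring
    rw [h1, integral_sub hint_glog (hint_g.mul_const _), integral_mul_const]
  -- the function ψ x = g x * log (R |x|)
  have hRabs_meas : Measurable fun x : ℝ => Real.log (R |x|) :=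
    Real.measurable_log.comp (hR_meas.comp measurable_abs)
  have hψmeas : Measurable fun x : ℝ => g x * Real.log (R |x|) := hmeas.mul hRabs_meas
  have hψbound : ∀ x, |g x * Real.log (R |x|)|
      ≤ |g x * Real.log (g x)| + g x * |x| + g x * |Real.log a| := by
    intro x
    rcases eq_or_lt_of_le (h0 x) with h | hgx
    · rw [← h]
      simp only [zero_mul, abs_zero, mul_zero, zero_add, abs_nonneg]
      positivity
    · have hRx := hlogpos x hgx
      have hup : Real.log (R |x|) ≤ |Real.log a| :=
        le_trans (Real.log_le_log hRx (hR_le_a _)) (le_abs_self _)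
      have hlo : Real.log (g x) - |x| ≤ Real.log (R |x|) := by
        have := Real.log_le_log (by positivity) (key1 x)
        rw [Real.log_mul (ne_of_gt hgx) (Real.exp_ne_zero _), Real.log_exp] at this
        linarith
      rw [abs_le]
      constructor
      · have h1 : -(g x * Real.log (R |x|)) ≤ -(g x * (Real.log (g x) - |x|)) := by
          have := mul_le_mul_of_nonneg_left hlo (h0 x)
          linarith
        have h2 : -(g x * (Real.log (g x) - |x|)) ≤ |g x * Real.log (g x)| + g x * |x| := by
          have : -(g x * Real.log (g x)) ≤ |g x * Real.log (g x)| := neg_le_abs _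
          nlinarith
        have h3 : (0:ℝ) ≤ g x * |Real.log a| := by positivity
        linarith
      · have h1 : g x * Real.log (R |x|) ≤ g x * |Real.log a| :=
          mul_le_mul_of_nonneg_left hup (h0 x)
        have h2 : (0:ℝ) ≤ |g x * Real.log (g x)| := abs_nonneg _
        have h3 : (0:ℝ) ≤ g x * |x| := by positivity
        linarith
  have hψint : Integrable (fun x => g x * Real.log (R |x|)) mu1 := by
    apply Integrable.mono' (((hint_glog.abs.add hint_gabs).add (hint_g.mul_const |Real.log a|)))
      hψmeas.aestronglyMeasurable
    filter_upwards with x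
    rw [norm_eq_abs]
    exact hψbound x
  -- pointwise entropy bound
  have hsub1 : Integrable (fun x => g x * Real.log (R |x|) - g x * Real.log a) mu1 :=
    hψint.sub (hint_g.mul_const _)
  have hadd1 : Integrable (fun x => g x * |x| + (g x * Real.log (R |x|) - g x * Real.log a)) mu1 :=
    hint_gabs.add hsub1
  have hpt : ∀ x, g x * (Real.log (g x) - Real.log a)
      ≤ g x * |x| + (g x * Real.log (R |x|) - g x * Real.log a) := by
    intro x
    rcases eq_or_lt_of_le (h0 x) with h | hgx
    · rw [← h]; simp
    · have hRx := hlogpos x hgx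
      have hle : Real.log (g x) ≤ |x| + Real.log (R |x|) := by
        have := Real.log_le_log (by positivity : (0:ℝ) < g x * Real.exp (-|x|)) (key1 x)
        rw [Real.log_mul (ne_of_gt hgx) (Real.exp_ne_zero _), Real.log_exp] at this
        linarith
      nlinarith [mul_le_mul_of_nonneg_left hle (h0 x)]
  -- I := the key integral
  set I : ℝ := ∫ x, g x * (Real.log a - Real.log (R |x|)) ∂mu1 with hI_def
  have hIint : Integrable (fun x => g x * (Real.log a - Real.log (R |x|))) mu1 := by
    have h1 : (fun x => g x * (Real.log a - Real.log (R |x|)))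
        = fun x => g x * Real.log a - g x * Real.log (R |x|) := by
      funext x; ring
    rw [h1]
    exact (hint_g.mul_const _).sub hψint
  have hInn : ∀ x, 0 ≤ g x * (Real.log a - Real.log (R |x|)) := by
    intro x
    rcases eq_or_lt_of_le (h0 x) with h | hgx
    · rw [← h]; simp
    · have hRx := hlogpos x hgx
      have := Real.log_le_log hRx (hR_le_a |x|)
      have h2 : 0 ≤ Real.log a - Real.log (R |x|) := by linarith
      positivity
  -- main bound : a ≤ I
  have key3 : a ≤ I := by
    have hI0 : 0 ≤ I := integral_nonneg hInn
    set T : Set (ℝ × ℝ) := {p : ℝ × ℝ | R |p.1| ≤ a * Real.exp (-p.2)} with hT_def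
    have hTmeas : MeasurableSet T := by
      apply measurableSet_le
      · exact hR_meas.comp (measurable_abs.comp measurable_fst)
      · exact (measurable_snd.neg.exp).const_mul a
    have hslice : ∀ x t : ℝ, T.indicator (fun _ => (1:ℝ≥0∞)) (x, t)
        = ({u : ℝ | R |x| ≤ a * Real.exp (-u)}).indicator (fun _ => (1:ℝ≥0∞)) t := by
      intro x t
      simp only [Set.indicator_apply, hT_def, mem_setOf_eq]
    have hslice_meas : ∀ x : ℝ, MeasurableSet {u : ℝ | R |x| ≤ a * Real.exp (-u)} := by
      intro x
      exact measurableSet_le measurable_const ((measurable_id'.neg.exp).const_mul a)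
    have hlayer : ∀ x : ℝ, ENNReal.ofReal (g x * (Real.log a - Real.log (R |x|)))
        = ∫⁻ t in Ioi (0:ℝ), ENNReal.ofReal (g x) * T.indicator (fun _ => 1) (x, t) := by
      intro x
      simp_rw [hslice x]
      rw [lintegral_const_mul _ (measurable_const.indicator (hslice_meas x))]
      rw [lintegral_indicator (hslice_meas x)]
      rw [setLIntegral_one, Measure.restrict_apply (hslice_meas x)]
      rcases eq_or_lt_of_le (h0 x) with h | hgx
      · rw [← h]; simp
      · have hRx := hlogpos x hgx
        have hSetEq : {u : ℝ | R |x| ≤ a * Real.exp (-u)} ∩ Ioi 0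
            = Ioc 0 (Real.log a - Real.log (R |x|)) := by
          ext t
          simp only [mem_inter_iff, mem_setOf_eq, mem_Ioi, mem_Ioc]
          have hiff : R |x| ≤ a * Real.exp (-t) ↔ t ≤ Real.log a - Real.log (R |x|) := by
            rw [← Real.log_le_log_iff hRx (by positivity),
              Real.log_mul (ne_of_gt ha) (Real.exp_ne_zero _), Real.log_exp]
            constructor <;> intro <;> linarith
          tauto
        rw [hSetEq, Real.volume_Ioc, ENNReal.ofReal_mul (h0 x), sub_zero]
    have hFmeas : Measurable (fun p : ℝ × ℝ =>
        ENNReal.ofReal (g p.1) * T.indicator (fun _ => (1:ℝ≥0∞)) p) :=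
      (ENNReal.measurable_ofReal.comp (hmeas.comp measurable_fst)).mul
        (measurable_const.indicator hTmeas)
    have hswap : ∫⁻ x, ENNReal.ofReal (g x * (Real.log a - Real.log (R |x|))) ∂mu1
        = ∫⁻ t in Ioi (0:ℝ), ∫⁻ x, ENNReal.ofReal (g x)
            * T.indicator (fun _ => 1) (x, t) ∂mu1 := by
      simp_rw [hlayer]
      exact lintegral_lintegral_swap (μ := mu1) (ν := volume.restrict (Ioi (0:ℝ)))
        hFmeas.aemeasurable
    have hlower : ∀ t : ℝ, t ∈ Ioi (0:ℝ) → ENNReal.ofReal (a * Real.exp (-t))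
        ≤ ∫⁻ x, ENNReal.ofReal (g x) * T.indicator (fun _ => 1) (x, t) ∂mu1 := by
      intro t ht
      have hc0 : 0 < a * Real.exp (-t) := by positivity
      have hca : a * Real.exp (-t) < a := by
        have h1 : Real.exp (-t) < 1 := Real.exp_lt_one_iff.mpr (by simpa using ht)
        nlinarith
      obtain ⟨s, hs0, hRs⟩ := hIVT _ hc0 hca
      have hpoint : (A s).indicator (fun x => ENNReal.ofReal (g x))
          ≤ fun x => ENNReal.ofReal (g x) * T.indicator (fun _ => 1) (x, t) := by
        intro x
        by_cases hx : x ∈ A s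
        · have hxT : (x, t) ∈ T := by
            show R |x| ≤ a * Real.exp (-t)
            rw [← hRs]
            exact hR_anti (le_of_lt hx)
          simp only [Set.indicator_of_mem hx, Set.indicator_of_mem hxT, mul_one, le_refl]
        · simp only [Set.indicator_of_notMem hx]
          exact zero_le
      calc ENNReal.ofReal (a * Real.exp (-t)) = ENNReal.ofReal (R s) := by rw [hRs]
        _ = ∫⁻ x in A s, ENNReal.ofReal (g x) ∂mu1 := by
            exact ofReal_integral_eq_lintegral_ofReal hint_g.integrableOn
              (ae_of_all _ h0)
        _ = ∫⁻ x, (A s).indicator (fun x => ENNReal.ofReal (g x)) x ∂mu1 := by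
            rw [lintegral_indicator (tailSet_meas s)]
        _ ≤ _ := lintegral_mono hpoint
    have hbase : ∫⁻ t in Ioi (0:ℝ), ENNReal.ofReal (a * Real.exp (-t)) = ENNReal.ofReal a := by
      have hint : IntegrableOn (fun t : ℝ => a * Real.exp (-t)) (Ioi 0) := by
        apply Integrable.const_mul
        apply (exp_neg_integrableOn_Ioi 0 one_pos).congr_fun ?_ measurableSet_Ioi
        intro t _; simp
      rw [← ofReal_integral_eq_lintegral_ofReal hint
        (ae_of_all _ fun t => by positivity)]
      rw [integral_const_mul, integral_exp_neg_Ioi]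
      simp
    have hchain : ENNReal.ofReal a ≤ ENNReal.ofReal I := by
      have h1 : ENNReal.ofReal I
          = ∫⁻ x, ENNReal.ofReal (g x * (Real.log a - Real.log (R |x|))) ∂mu1 := by
        rw [hI_def]
        exact ofReal_integral_eq_lintegral_ofReal hIint (ae_of_all _ hInn)
      rw [h1, hswap, ← hbase]
      exact lintegral_mono_ae ((ae_restrict_mem measurableSet_Ioi).mono hlower)
    exact (ENNReal.ofReal_le_ofReal_iff hI0).mp hchain
  -- conclusion
  have step1 : entropy mu1 g ≤ (∫ x, g x * |x| ∂mu1) - I := by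
    rw [hEnt, hI_def]
    have h1 : ∫ x, g x * (Real.log (g x) - Real.log a) ∂mu1
        ≤ ∫ x, (g x * |x| + (g x * Real.log (R |x|) - g x * Real.log a)) ∂mu1 := by
      apply integral_mono ?_ ?_ hpt
      · have h2 : (fun x => g x * (Real.log (g x) - Real.log a))
            = fun x => g x * Real.log (g x) - g x * Real.log a := by
          funext x; ring
        rw [h2]; exact hint_glog.sub (hint_g.mul_const _)
      · exact hadd1
    rw [integral_add hint_gabs hsub1,
      integral_sub hψint (hint_g.mul_const _)] at h1
    have h3 : ∫ x, g x * (Real.log a - Real.log (R |x|)) ∂mu1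
        = ∫ x, g x * Real.log a ∂mu1 - ∫ x, g x * Real.log (R |x|) ∂mu1 := by
      have h4 : (fun x => g x * (Real.log a - Real.log (R |x|)))
          = fun x => g x * Real.log a - g x * Real.log (R |x|) := by
        funext x; ring
      rw [h4, integral_sub (hint_g.mul_const _) hψint]
    rw [h3]
    linarith
  calc entropy mu1 g ≤ (∫ x, g x * |x| ∂mu1) - I := step1
    _ ≤ (∫ x, g x * |x| ∂mu1) - a := by linarith
    _ = ∫ x, g x * (|x| - 1) ∂mu1 := hRHS.symm


/-- Chain rule (exact identity) for entropy over a product measure. -/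
theorem entropy_prod {α β : Type*} [MeasurableSpace α] [MeasurableSpace β]
    (μ : Measure α) (ν : Measure β) [IsFiniteMeasure μ] [IsFiniteMeasure ν]
    (f : α × β → ℝ) (hf : Measurable f) (h0 : ∀ p, 0 ≤ f p) {C : ℝ} (hC : ∀ p, f p ≤ C) :
    entropy (μ.prod ν) f
      = (∫ x, entropy ν (fun y => f (x, y)) ∂μ)
        + entropy μ (fun x => ∫ y, f (x, y) ∂ν) := by
  have habs : ∀ p, |f p| ≤ C := fun p => by rw [abs_of_nonneg (h0 p)]; exact hC p
  have hint_f : Integrable f (μ.prod ν) :=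
    integrable_of_bdd hf.aestronglyMeasurable habs
  have hint_fl : Integrable (fun p => f p * Real.log (f p)) (μ.prod ν) :=
    integrable_of_bdd (hf.mul (Real.measurable_log.comp hf)).aestronglyMeasurable
      (C := 1 + C * |Real.log C|) (fun p => abs_mul_log_le (h0 p) (hC p))
  have hFsm : StronglyMeasurable (fun x => ∫ y, f (x, y) ∂ν) :=
    hf.stronglyMeasurable.integral_prod_right'
  have hFbd : ∀ x, |∫ y, f (x, y) ∂ν| ≤ |C| * (ν univ).toReal := by
    intro x
    have := norm_integral_le_of_norm_le_const (μ := ν) (f := fun y => f (x, y))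
      (C := |C|) (ae_of_all _ fun y => by
        rw [norm_eq_abs]; exact le_trans (habs _) (le_abs_self _))
    simpa [measureReal_def] using this
  have hF0 : ∀ x, 0 ≤ ∫ y, f (x, y) ∂ν := fun x => integral_nonneg (fun y => h0 _)
  have hint_F : Integrable (fun x => ∫ y, f (x, y) ∂ν) μ :=
    integrable_of_bdd hFsm.aestronglyMeasurable hFbd
  have hint_Flog : Integrable (fun x => (∫ y, f (x, y) ∂ν) * Real.log (∫ y, f (x, y) ∂ν)) μ :=
    integrable_of_bdd
      (hFsm.measurable.mul (Real.measurable_log.comp hFsm.measurable)).aestronglyMeasurable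
      (C := 1 + (|C| * (ν univ).toReal) * |Real.log (|C| * (ν univ).toReal)|)
      (fun x => abs_mul_log_le (hF0 x) (le_trans (le_abs_self _) (hFbd x)))
  have hint_inner : Integrable (fun x => ∫ y, f (x, y) * Real.log (f (x, y)) ∂ν) μ :=
    hint_fl.integral_prod_left
  have hFub1 : ∫ p, f p ∂(μ.prod ν) = ∫ x, ∫ y, f (x, y) ∂ν ∂μ := integral_prod f hint_f
  have hFub2 : ∫ p, f p * Real.log (f p) ∂(μ.prod ν)
      = ∫ x, ∫ y, f (x, y) * Real.log (f (x, y)) ∂ν ∂μ :=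
    integral_prod _ hint_fl
  have hsplit : ∫ x, ((∫ y, f (x, y) * Real.log (f (x, y)) ∂ν)
        - (∫ y, f (x, y) ∂ν) * Real.log (∫ y, f (x, y) ∂ν)) ∂μ
      = (∫ x, ∫ y, f (x, y) * Real.log (f (x, y)) ∂ν ∂μ)
        - ∫ x, (∫ y, f (x, y) ∂ν) * Real.log (∫ y, f (x, y) ∂ν) ∂μ :=
    integral_sub hint_inner hint_Flog
  simp only [entropy]
  rw [hFub1, hFub2, hsplit]
  ring

theorem prod_withDensity {α β : Type*} [MeasurableSpace α] [MeasurableSpace β]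
    (μ : Measure α) (ν : Measure β) [SigmaFinite μ] [SigmaFinite ν]
    {f : α → ℝ≥0∞} {g : β → ℝ≥0∞} (hf : Measurable f) (hg : Measurable g)
    (h1 : SigmaFinite (μ.withDensity f)) (h2 : SigmaFinite (ν.withDensity g)) :
    (μ.withDensity f).prod (ν.withDensity g)
      = (μ.prod ν).withDensity fun p => f p.1 * g p.2 := by
  haveI := h1; haveI := h2
  refine Measure.prod_eq fun s t hs ht => ?_
  rw [withDensity_apply _ (hs.prod ht), ← Measure.prod_restrict s t,
    lintegral_prod_mul hf.aemeasurable hg.aemeasurable,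
    withDensity_apply _ hs, withDensity_apply _ ht]

theorem withDensity_map_equiv {α β : Type*} [MeasurableSpace α] [MeasurableSpace β]
    (e : α ≃ᵐ β) (μ : Measure α) {f : β → ℝ≥0∞} (hf : Measurable f) :
    (Measure.map e μ).withDensity f = Measure.map e (μ.withDensity (f ∘ e)) := by
  ext s hs
  rw [withDensity_apply _ hs, Measure.map_apply e.measurable hs,
    withDensity_apply _ (e.measurable hs),
    Measure.restrict_map e.measurable hs, lintegral_map hf e.measurable]
  rfl

theorem entropy_map_equiv {α β : Type*} [MeasurableSpace α] [MeasurableSpace β]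
    (e : α ≃ᵐ β) (μ : Measure α) (f : β → ℝ) :
    entropy (Measure.map e μ) f = entropy μ (fun x => f (e x)) := by
  simp only [entropy, integral_map_equiv]

lemma lamR_den_meas (n : ℕ) :
    Measurable fun x : Fin n → ℝ =>
      ENNReal.ofReal (((2 : ℝ) ^ n)⁻¹ * Real.exp (-(∑ i, |x i|))) := by
  fun_prop

lemma integrable_prod_exp (n : ℕ) :
    Integrable (fun x : Fin n → ℝ => Real.exp (-(∑ i, |x i|))) := by
  have h : (fun x : Fin n → ℝ => Real.exp (-(∑ i, |x i|)))
      = fun x => ∏ i, Real.exp (-|x i|) := by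
    funext x
    rw [← Real.exp_sum]
    simp [Finset.sum_neg_distrib]
  rw [h]
  exact Integrable.fin_nat_prod (f := fun (_ : Fin n) (t : ℝ) => Real.exp (-|t|))
    (fun i => integrable_exp_neg_abs)

instance lamR_finite (n : ℕ) : IsFiniteMeasure (lamR n) := by
  have h : Integrable (fun x : Fin n → ℝ => ((2:ℝ)^n)⁻¹ * Real.exp (-(∑ i, |x i|))) volume :=
    (integrable_prod_exp n).const_mul _
  constructor
  rw [lamR, withDensity_apply _ MeasurableSet.univ, Measure.restrict_univ]
  exact h.lintegral_lt_top

instance lamR_sigma (n : ℕ) : SigmaFinite (lamR n) := inferInstance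

/-- the recursive structure of `lamR` -/
theorem lamR_succ (n : ℕ) :
    lamR (n + 1) = Measure.map
      (MeasurableEquiv.piFinSuccAbove (fun _ : Fin (n + 1) => ℝ) 0).symm
      (mu1.prod (lamR n)) := by
  set e := MeasurableEquiv.piFinSuccAbove (fun _ : Fin (n + 1) => ℝ) 0 with he
  have hmp : MeasurePreserving e.symm
      ((volume : Measure ℝ).prod (volume : Measure (Fin n → ℝ))) volume :=
    (volume_preserving_piFinSuccAbove (fun _ : Fin (n + 1) => ℝ) 0).symm
  have hprod : mu1.prod (lamR n)
      = ((volume : Measure ℝ).prod (volume : Measure (Fin n → ℝ))).withDensity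
          fun p => ENNReal.ofReal ((2:ℝ)⁻¹ * Real.exp (-|p.1|))
            * ENNReal.ofReal (((2 : ℝ) ^ n)⁻¹ * Real.exp (-(∑ i, |p.2 i|))) := by
    rw [mu1, lamR]
    exact prod_withDensity volume volume den_meas (lamR_den_meas n)
      (by rw [← mu1]; infer_instance) (by rw [← lamR]; infer_instance)
  have hdens : ∀ p : ℝ × (Fin n → ℝ),
      ENNReal.ofReal (((2 : ℝ) ^ (n+1))⁻¹ * Real.exp (-(∑ i, |e.symm p i|)))
      = ENNReal.ofReal ((2:ℝ)⁻¹ * Real.exp (-|p.1|))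
        * ENNReal.ofReal (((2 : ℝ) ^ n)⁻¹ * Real.exp (-(∑ i, |p.2 i|))) := by
    rintro ⟨x, y⟩
    have hsum : ∑ i, |e.symm (x, y) i| = |x| + ∑ i, |y i| := by
      rw [Fin.sum_univ_succAbove _ 0]
      simp [he, MeasurableEquiv.piFinSuccAbove_symm_apply]
    rw [hsum, ← ENNReal.ofReal_mul (by positivity)]
    congr 1
    rw [pow_succ, neg_add, Real.exp_add]
    ring
  rw [hprod]
  have h2 : ((volume : Measure ℝ).prod (volume : Measure (Fin n → ℝ))).withDensity
        (fun p => ENNReal.ofReal ((2:ℝ)⁻¹ * Real.exp (-|p.1|))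
          * ENNReal.ofReal (((2 : ℝ) ^ n)⁻¹ * Real.exp (-(∑ i, |p.2 i|))))
      = ((volume : Measure ℝ).prod (volume : Measure (Fin n → ℝ))).withDensity
        ((fun x : Fin (n+1) → ℝ =>
          ENNReal.ofReal (((2 : ℝ) ^ (n+1))⁻¹ * Real.exp (-(∑ i, |x i|)))) ∘ e.symm) := by
    congr 1
    funext p
    exact (hdens p).symm
  rw [h2, ← withDensity_map_equiv e.symm _ (lamR_den_meas (n+1)), hmp.map_eq, lamR]

lemma integrable_sumAbs (n : ℕ) :
    Integrable (fun y : Fin n → ℝ => ∑ i, |y i|) (lamR n) := by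
  rw [lamR, integrable_withDensity_iff (lamR_den_meas n)
    (ae_of_all _ fun x => ENNReal.ofReal_lt_top)]
  have heq : (fun y : Fin n → ℝ => (∑ i, |y i|)
        * (ENNReal.ofReal (((2:ℝ)^n)⁻¹ * Real.exp (-(∑ i, |y i|)))).toReal)
      = fun y : Fin n → ℝ => ((2:ℝ)^n)⁻¹ * ((∑ i, |y i|) * Real.exp (-(∑ i, |y i|))) := by
    funext y; rw [ENNReal.toReal_ofReal (by positivity)]; ring
  rw [heq]
  apply Integrable.const_mul
  have hintg : Integrable (fun y : Fin n → ℝ => 2 * Real.exp (-(2⁻¹ * ∑ i, |y i|))) := by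
    have h : (fun y : Fin n → ℝ => Real.exp (-(2⁻¹ * ∑ i, |y i|)))
        = fun y : Fin n → ℝ => ∏ i, Real.exp (-(2⁻¹ * |y i|)) := by
      funext y
      rw [← Real.exp_sum]
      congr 1
      rw [Finset.mul_sum]
      simp
    exact (h ▸ Integrable.fin_nat_prod (f := fun (_ : Fin n) (t : ℝ) => Real.exp (-(2⁻¹ * |t|)))
      (fun i => integrable_exp_neg_mul_abs (by norm_num))).const_mul 2
  apply Integrable.mono' hintg
  · apply Measurable.aestronglyMeasurable
    fun_prop
  · filter_upwards with y
    have ht : 0 ≤ ∑ i, |y i| := Finset.sum_nonneg fun i _ => abs_nonneg _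
    rw [norm_eq_abs, abs_of_nonneg (by positivity)]
    set t := ∑ i, |y i|
    have h1 : t ≤ 2 * Real.exp (2⁻¹ * t) := by
      nlinarith [Real.add_one_le_exp (2⁻¹ * t), Real.exp_pos (2⁻¹ * t)]
    calc t * Real.exp (-t) ≤ (2 * Real.exp (2⁻¹ * t)) * Real.exp (-t) :=
          mul_le_mul_of_nonneg_right h1 (Real.exp_pos _).le
      _ = 2 * Real.exp (-(2⁻¹ * t)) := by
          rw [mul_assoc, ← Real.exp_add]; ring_nf


-- basic facts about the equivalence
lemma E_apply (n : ℕ) (p : ℝ × (Fin n → ℝ)) :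
    (MeasurableEquiv.piFinSuccAbove (fun _ : Fin (n + 1) => ℝ) 0).symm p
      = Fin.cons p.1 p.2 := by
  simp [MeasurableEquiv.piFinSuccAbove]
  rfl

lemma sum_abs_cons (n : ℕ) (x : ℝ) (y : Fin n → ℝ) :
    ∑ i, |Fin.cons x y i| = |x| + ∑ i, |y i| := by
  rw [Fin.sum_univ_succ]
  simp

theorem main : ∀ (n : ℕ) (g : (Fin n → ℝ) → ℝ),
    Measurable g → (∀ x, 0 ≤ g x) → (∃ C : ℝ, ∀ x, g x ≤ C) →
    (∀ (x ε : Fin n → ℝ), (∀ i, ε i = 1 ∨ ε i = -1) →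
      g (fun i => ε i * x i) = g x) →
    (∀ x y : Fin n → ℝ, (∀ i, |y i| ≤ |x i|) → g y ≤ g x) →
    entropy (lamR n) g ≤ ∫ x, g x * ((∑ i, |x i|) - n) ∂(lamR n) := by
  intro n
  induction n with
  | zero =>
    intro g hg_meas hg_nonneg hg_bdd hg_sign hg_mono
    have hconst : g = fun _ => g default :=
      funext fun x => by rw [Subsingleton.elim x default]
    have hRHS : ∫ x, g x * ((∑ i, |x i|) - (0:ℕ)) ∂(lamR 0) = 0 := by
      have : (fun x : Fin 0 → ℝ => g x * ((∑ i, |x i|) - (0:ℕ))) = fun _ => 0 := by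
        funext x; simp
      rw [this, integral_zero]
    rw [hRHS]
    have hmass : ((lamR 0) univ).toReal = 1 := by
      have h1 : lamR 0 = volume := by
        rw [lamR]
        have : (fun x : Fin 0 → ℝ =>
            ENNReal.ofReal (((2:ℝ) ^ (0:ℕ))⁻¹ * Real.exp (-(∑ i, |x i|))))
            = (1 : (Fin 0 → ℝ) → ℝ≥0∞) := by
          funext x; simp [Pi.one_apply]
        rw [this, withDensity_one]
      rw [h1]
      rw [volume_pi, Measure.pi_univ]
      simp
    rw [entropy, hconst]
    rw [integral_const, integral_const, measureReal_def, hmass]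
    simp
  | succ n ih =>
    intro g hg_meas hg_nonneg hg_bdd hg_sign hg_mono
    obtain ⟨C, hC⟩ := hg_bdd
    set e := MeasurableEquiv.piFinSuccAbove (fun _ : Fin (n + 1) => ℝ) 0 with he
    set P := mu1.prod (lamR n) with hP
    set f : ℝ × (Fin n → ℝ) → ℝ := fun p => g (e.symm p) with hf_def
    have hf : Measurable f := hg_meas.comp e.symm.measurable
    have hf0 : ∀ p, 0 ≤ f p := fun p => hg_nonneg _
    have hfC : ∀ p, f p ≤ C := fun p => hC _
    have hC0 : 0 ≤ C := le_trans (hg_nonneg default) (hC default)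
    -- entropy transfer
    have hLHS : entropy (lamR (n+1)) g = entropy P f := by
      rw [lamR_succ n, entropy_map_equiv]
    -- RHS transfer
    have hRHS : ∫ x, g x * ((∑ i, |x i|) - (n+1:ℕ)) ∂(lamR (n+1))
        = ∫ p, f p * ((|p.1| + ∑ i, |p.2 i|) - (n+1:ℕ)) ∂P := by
      rw [lamR_succ n, integral_map_equiv]
      apply integral_congr_ae
      filter_upwards with p
      rw [hf_def]
      congr 2
      rw [E_apply, sum_abs_cons]
    -- slice bound from the induction hypothesis
    have hslice : ∀ x : ℝ, entropy (lamR n) (fun y => f (x, y))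
        ≤ ∫ y, f (x, y) * ((∑ i, |y i|) - n) ∂(lamR n) := by
      intro x
      apply ih
      · exact hf.comp measurable_prodMk_left
      · intro y; exact hf0 _
      · exact ⟨C, fun y => hfC _⟩
      · intro y ε hε
        have hE1 : e.symm (x, fun i => ε i * y i)
            = fun i => (Fin.cons 1 ε : Fin (n+1) → ℝ) i * e.symm (x, y) i := by
          rw [E_apply, E_apply]
          funext i
          refine Fin.cases ?_ (fun j => ?_) i
          · simp
          · simp
        show g (e.symm (x, fun i => ε i * y i)) = g (e.symm (x, y))
        rw [hE1]
        exact hg_sign _ _ (fun i => Fin.cases (Or.inl (by simp)) (fun j => by simpa using hε j) i)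
      · intro y y' hyy
        show g (e.symm (x, y')) ≤ g (e.symm (x, y))
        rw [E_apply, E_apply]
        apply hg_mono
        intro i
        refine Fin.cases ?_ (fun j => ?_) i
        · simp
        · simpa using hyy j
    -- the marginal F
    set F : ℝ → ℝ := fun x => ∫ y, f (x, y) ∂(lamR n) with hF_def
    have hFsm : StronglyMeasurable F := hf.stronglyMeasurable.integral_prod_right'
    have hF0 : ∀ x, 0 ≤ F x := fun x => integral_nonneg fun y => hf0 _
    have hslice_int : ∀ x : ℝ, Integrable (fun y => f (x, y)) (lamR n) := by
      intro x
      apply integrable_of_bdd (hf.comp measurable_prodMk_left).aestronglyMeasurable (C := C)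
      intro y
      show |f (x, y)| ≤ C
      rw [abs_of_nonneg (hf0 _)]; exact hfC _
    have hFC : ∀ x, F x ≤ C * ((lamR n) univ).toReal := by
      intro x
      calc F x ≤ ∫ _, C ∂(lamR n) :=
            integral_mono (hslice_int x) (integrable_const C) (fun y => hfC _)
        _ = C * ((lamR n) univ).toReal := by rw [integral_const, smul_eq_mul, measureReal_def]; ring
    have hFmono : ∀ x y : ℝ, |y| ≤ |x| → F y ≤ F x := by
      intro x y hxy
      apply integral_mono (hslice_int y) (hslice_int x)
      intro z
      show g (e.symm (y, z)) ≤ g (e.symm (x, z))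
      rw [E_apply, E_apply]
      apply hg_mono
      intro i
      refine Fin.cases ?_ (fun j => ?_) i
      · simpa using hxy
      · simp
    have hFbound : entropy mu1 F ≤ ∫ x, F x * (|x| - 1) ∂mu1 :=
      one_dim F hFsm.measurable hF0 hFC hFmono
    -- chain rule
    have hchain := entropy_prod mu1 (lamR n) f hf hf0 hfC
    -- integrability on the product
    have hbddf : ∃ B, ∀ p : ℝ × (Fin n → ℝ), ‖f p‖ ≤ B :=
      ⟨C, fun p => by rw [norm_eq_abs, abs_of_nonneg (hf0 p)]; exact hfC p⟩
    have hsnd : Integrable (fun p : ℝ × (Fin n → ℝ) => ∑ i, |p.2 i|) P := by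
      have hmap : Measure.map Prod.snd P = lamR n := by
        rw [hP, Measure.map_snd_prod, measure_univ, one_smul]
      have h := integrable_sumAbs n
      rw [← hmap] at h
      exact (integrable_map_measure
        (by exact (Finset.measurable_sum _ fun i _ =>
          (measurable_pi_apply i).abs).aestronglyMeasurable)
        measurable_snd.aemeasurable).mp h
    have hfst : Integrable (fun p : ℝ × (Fin n → ℝ) => |p.1|) P := by
      have hmap : Measure.map Prod.fst P = ((lamR n) univ) • mu1 := by
        rw [hP, Measure.map_fst_prod]
      have h : Integrable (fun x : ℝ => |x|) (((lamR n) univ) • mu1) :=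
        integrable_abs_mu1.smul_measure (measure_ne_top _ _)
      rw [← hmap] at h
      exact (integrable_map_measure measurable_abs.aestronglyMeasurable
        measurable_fst.aemeasurable).mp h
    have hint1 : Integrable (fun p => f p * ((∑ i, |p.2 i|) - n)) P :=
      Integrable.bdd_mul (hsnd.sub (integrable_const (n:ℝ))) hf.aestronglyMeasurable (ae_of_all _ hbddf.choose_spec)
    have hint2 : Integrable (fun p => f p * (|p.1| - 1)) P :=
      Integrable.bdd_mul (hfst.sub (integrable_const 1)) hf.aestronglyMeasurable (ae_of_all _ hbddf.choose_spec)
    -- Fubini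
    have hFub1 : ∫ x, (∫ y, f (x, y) * ((∑ i, |y i|) - n) ∂(lamR n)) ∂mu1
        = ∫ p, f p * ((∑ i, |p.2 i|) - n) ∂P := (integral_prod _ hint1).symm
    have hFub2 : ∫ x, F x * (|x| - 1) ∂mu1 = ∫ p, f p * (|p.1| - 1) ∂P := by
      rw [integral_prod _ hint2]
      apply integral_congr_ae
      filter_upwards with x
      exact (integral_mul_const _ _).symm
    -- integrate the slice bound
    have hmono_int : ∫ x, entropy (lamR n) (fun y => f (x, y)) ∂mu1
        ≤ ∫ x, (∫ y, f (x, y) * ((∑ i, |y i|) - n) ∂(lamR n)) ∂mu1 := by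
      have h1 : Integrable (fun x => ∫ y, f (x, y) * Real.log (f (x, y)) ∂(lamR n)) mu1 :=
        (integrable_of_bdd (μ := P) (C := 1 + C * |Real.log C|)
          (hf.mul (Real.measurable_log.comp hf)).aestronglyMeasurable
          (fun p => abs_mul_log_le (hf0 p) (hfC p))).integral_prod_left
      have h2 : Integrable (fun x => F x * Real.log (F x)) mu1 := by
        apply integrable_of_bdd (C := 1 + (C * ((lamR n) univ).toReal)
          * |Real.log (C * ((lamR n) univ).toReal)|)
          (hFsm.measurable.mul (Real.measurable_log.comp hFsm.measurable)).aestronglyMeasurable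
        intro x
        exact abs_mul_log_le (hF0 x) (hFC x)
      exact integral_mono (h1.sub h2) hint1.integral_prod_left hslice
    -- conclusion
    rw [hLHS, hRHS, hchain]
    have hsum_split : ∫ p, f p * ((|p.1| + ∑ i, |p.2 i|) - (n+1:ℕ)) ∂P
        = (∫ p, f p * ((∑ i, |p.2 i|) - n) ∂P) + ∫ p, f p * (|p.1| - 1) ∂P := by
      rw [← integral_add hint1 hint2]
      apply integral_congr_ae
      filter_upwards with p
      push_cast
      ring
    rw [hsum_split]
    exact add_le_add (le_of_le_of_eq hmono_int hFub1) (le_of_le_of_eq hFbound hFub2)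


end EntropyExpAux

/-- **Multidimensional entropy inequality for the exponential measure.** For a
bounded measurable `g : ℝⁿ → ℝ₊` which is even in each coordinate and monotone
with respect to the absolute values of the coordinates,
`Ent_(λ_n) g ≤ ∫ g(x)·(|x|₁ - n) dλ_n(x)`. -/
theorem entropy_le_integral_exponential
    (n : ℕ) (g : (Fin n → ℝ) → ℝ)
    (hg_meas : Measurable g)
    (hg_nonneg : ∀ x, 0 ≤ g x)
    (hg_bdd : ∃ C : ℝ, ∀ x, g x ≤ C)
    (hg_sign : ∀ (x ε : Fin n → ℝ), (∀ i, ε i = 1 ∨ ε i = -1) →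
      g (fun i => ε i * x i) = g x)
    (hg_mono : ∀ x y : Fin n → ℝ, (∀ i, |y i| ≤ |x i|) → g y ≤ g x) :
    entropy (lamR n) g ≤ ∫ x, g x * ((∑ i, |x i|) - n) ∂(lamR n) :=
  EntropyExpAux.main n g hg_meas hg_nonneg hg_bdd hg_sign hg_mono
end

section
/- Let μ be the probability measure on ℝ₊ = [0,∞) with density x ↦ e^{-x} with respect to Lebesgue measure, and let f : ℝ₊ → ℝ₊ be a bounded non-decreasing function. Then Ent_μ f ≤ ∫_{ℝ₊} f(x)·(x − 1) dμ(x). -/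
open MeasureTheory Real Set

section Aux

open Filter Function Topology
open scoped NNReal ENNReal


private lemma aux_x_le_exp (x : ℝ) (hx : 0 ≤ x) : x * Real.exp (-x) ≤ Real.exp (-(2⁻¹ * x)) := by
  have h2 : Real.exp (2⁻¹ * x) = Real.exp (4⁻¹ * x) * Real.exp (4⁻¹ * x) := by
    rw [← Real.exp_add]; ring_nf
  have h1 : x ≤ Real.exp (2⁻¹ * x) := by
    nlinarith [Real.add_one_le_exp (4⁻¹ * x), Real.exp_pos (4⁻¹ * x), sq_nonneg (4⁻¹ * x - 1)]
  calc x * Real.exp (-x) ≤ Real.exp (2⁻¹ * x) * Real.exp (-x) :=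
        mul_le_mul_of_nonneg_right h1 (Real.exp_pos _).le
    _ = Real.exp (-(2⁻¹ * x)) := by rw [← Real.exp_add]; ring_nf

private lemma aux_neg_mul_log {u : ℝ} (hu : 0 ≤ u) : -(u * Real.log u) ≤ 1 := by
  rcases hu.eq_or_lt with h | h
  · simp [← h]
  · have h1 := Real.one_sub_inv_le_log_of_pos h
    have h2 : u * (1 - u⁻¹) ≤ u * Real.log u := mul_le_mul_of_nonneg_left h1 h.le
    have h3 : u * (1 - u⁻¹) = u - 1 := by field_simp
    nlinarith

private lemma core_ineq (g : ℝ → ℝ) (hmono : Monotone g) (hg0 : ∀ x, 0 ≤ g x) {C : ℝ}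
    (hgC : ∀ x, g x ≤ C) (hrc : ∀ x, ContinuousWithinAt g (Set.Ici x) x) :
    (∫ x in Ioi (0:ℝ), g x * Real.exp (-x) * Real.log (g x)) ≤
      (∫ x in Ioi (0:ℝ), g x * Real.exp (-x) * (x - 1)) +
        (∫ x in Ioi (0:ℝ), g x * Real.exp (-x)) *
          Real.log (∫ x in Ioi (0:ℝ), g x * Real.exp (-x)) := by
  have hC0 : 0 ≤ C := (hg0 0).trans (hgC 0)
  have hgm : Measurable g := hmono.measurable
  have hh_meas : Measurable fun t : ℝ => g t * Real.exp (-t) :=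
    hgm.mul (Real.measurable_exp.comp measurable_neg)
  have hh0 : ∀ t, 0 ≤ g t * Real.exp (-t) := fun t => mul_nonneg (hg0 t) (Real.exp_pos _).le
  -- integrability of the basic density
  have I_h : ∀ b : ℝ, IntegrableOn (fun t => g t * Real.exp (-t)) (Ioi b) := by
    intro b
    refine Integrable.mono' ((exp_neg_integrableOn_Ioi b one_pos).const_mul C)
      hh_meas.aestronglyMeasurable (Filter.Eventually.of_forall fun x => ?_)
    rw [Real.norm_eq_abs, abs_of_nonneg (hh0 x)]
    simp only [neg_one_mul]
    exact mul_le_mul_of_nonneg_right (hgC x) (Real.exp_pos _).le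
  have Ih_ab : ∀ a b : ℝ, IntervalIntegrable (fun t => g t * Real.exp (-t)) volume a b := by
    intro a b
    rw [intervalIntegrable_iff]
    exact (I_h (min a b)).mono_set Set.Ioc_subset_Ioi_self
  set S : ℝ → ℝ := fun x => ∫ t in Ioi x, g t * Real.exp (-t) with hSdef
  have S_nonneg : ∀ x, 0 ≤ S x := fun x =>
    setIntegral_nonneg measurableSet_Ioi fun t _ => hh0 t
  have S_anti : Antitone S := fun x y hxy =>
    setIntegral_mono_set (I_h x) (Filter.Eventually.of_forall hh0)
      (HasSubset.Subset.eventuallyLE (Ioi_subset_Ioi hxy))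
  have S_split : ∀ b y : ℝ, b ≤ y →
      S b = (∫ t in b..y, g t * Real.exp (-t)) + S y := by
    intro b y hby
    have h1 := setIntegral_union (μ := volume) (f := fun t => g t * Real.exp (-t))
      (Set.Ioc_disjoint_Ioi (le_refl y)) measurableSet_Ioi
      ((I_h b).mono_set Set.Ioc_subset_Ioi_self) (I_h y)
    rw [Set.Ioc_union_Ioi_eq_Ioi hby] at h1
    rw [intervalIntegral.integral_of_le hby]
    exact h1
  have S_cont : Continuous S := by
    rw [continuous_iff_continuousAt]
    intro x
    have hprim : Continuous fun y => S (x - 1) - ∫ t in (x-1)..y, g t * Real.exp (-t) :=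
      continuous_const.sub (intervalIntegral.continuous_primitive Ih_ab (x - 1))
    refine hprim.continuousAt.congr ?_
    filter_upwards [isOpen_Ioi.mem_nhds (show x - 1 < x by linarith)] with y hy
    have := S_split (x - 1) y (le_of_lt hy)
    linarith
  have hgS : ∀ x, g x * Real.exp (-x) ≤ S x := by
    intro x
    have hint : IntegrableOn (fun t => g x * Real.exp (-t)) (Ioi x) := by
      have := (exp_neg_integrableOn_Ioi x one_pos).const_mul (g x)
      simp only [neg_one_mul] at this
      exact this
    have h1 : g x * Real.exp (-x) = ∫ t in Ioi x, g x * Real.exp (-t) := by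
      rw [MeasureTheory.integral_const_mul, integral_exp_neg_Ioi]
    rw [h1]
    exact setIntegral_mono_on hint (I_h x) measurableSet_Ioi fun t ht =>
      mul_le_mul_of_nonneg_right (hmono (le_of_lt ht)) (Real.exp_pos _).le
  -- integrability lemmas on `Ici 0`
  have hexp_half : IntegrableOn (fun x : ℝ => Real.exp (-(2⁻¹ * x))) (Ici (0:ℝ)) := by
    rw [integrableOn_Ici_iff_integrableOn_Ioi]
    have := exp_neg_integrableOn_Ioi (0:ℝ) (show (0:ℝ) < 2⁻¹ by norm_num)
    simpa [neg_mul] using this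
  have hexp_one : IntegrableOn (fun x : ℝ => Real.exp (-x)) (Ici (0:ℝ)) := by
    rw [integrableOn_Ici_iff_integrableOn_Ioi]
    have := exp_neg_integrableOn_Ioi (0:ℝ) one_pos
    simpa [neg_one_mul] using this
  have Ihc : IntegrableOn (fun x => g x * Real.exp (-x)) (Ici (0:ℝ)) :=
    by rw [integrableOn_Ici_iff_integrableOn_Ioi]; exact I_h 0
  have Ihx : IntegrableOn (fun x => g x * Real.exp (-x) * x) (Ici (0:ℝ)) := by
    refine Integrable.mono' (hexp_half.const_mul C)
      ((hh_meas.mul measurable_id).aestronglyMeasurable) ?_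
    rw [ae_restrict_iff' measurableSet_Ici]
    refine Filter.Eventually.of_forall fun x hx => ?_
    rw [Real.norm_eq_abs, abs_of_nonneg (mul_nonneg (hh0 x) hx)]
    calc g x * Real.exp (-x) * x ≤ C * (x * Real.exp (-x)) := by
          have := mul_le_mul_of_nonneg_right (hgC x) (mul_nonneg (Real.exp_pos (-x)).le hx)
          nlinarith [mul_le_mul_of_nonneg_right (hgC x)
            (mul_nonneg (Real.exp_pos (-x)).le hx)]
      _ ≤ C * Real.exp (-(2⁻¹ * x)) :=
          mul_le_mul_of_nonneg_left (aux_x_le_exp x hx) hC0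
  have Ihlg : IntegrableOn (fun x => g x * Real.exp (-x) * Real.log (g x)) (Ici (0:ℝ)) := by
    refine Integrable.mono' (hexp_one.const_mul (1 + C * C))
      ((hh_meas.mul (Real.measurable_log.comp hgm)).aestronglyMeasurable)
      (Filter.Eventually.of_forall fun x => ?_)
    have hb : |g x * Real.log (g x)| ≤ 1 + C * C := by
      rcases le_or_gt (g x) 1 with h1 | h1
      · have hnp : g x * Real.log (g x) ≤ 0 :=
          mul_nonpos_of_nonneg_of_nonpos (hg0 x) (Real.log_nonpos (hg0 x) h1)
        rw [abs_of_nonpos hnp]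
        have := aux_neg_mul_log (hg0 x)
        nlinarith [mul_self_nonneg C]
      · have hlogpos : 0 ≤ Real.log (g x) := Real.log_nonneg h1.le
        rw [abs_of_nonneg (mul_nonneg (hg0 x) hlogpos)]
        have h2 : Real.log (g x) ≤ g x := by
          have := Real.log_le_sub_one_of_pos (lt_trans one_pos h1)
          linarith
        nlinarith [hgC x, hg0 x]
    have : |g x * Real.exp (-x) * Real.log (g x)| = |g x * Real.log (g x)| * Real.exp (-x) := by
      rw [abs_mul, abs_mul, abs_mul, abs_of_nonneg (Real.exp_pos (-x)).le]
      ring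
    rw [Real.norm_eq_abs, this]
    exact mul_le_mul_of_nonneg_right hb (Real.exp_pos _).le
  have Iphi : IntegrableOn (fun x => g x * Real.exp (-x) * Real.log (S x)) (Ici (0:ℝ)) := by
    set K : ℝ := 1 + C + C * |Real.log (S 0)| with hKdef
    have hK0 : 0 ≤ K := by positivity
    refine Integrable.mono' (hexp_half.const_mul K)
      ((hh_meas.mul (Real.measurable_log.comp S_cont.measurable)).aestronglyMeasurable) ?_
    rw [ae_restrict_iff' measurableSet_Ici]
    refine Filter.Eventually.of_forall fun x hx => ?_
    have hexpmono : Real.exp (-x) ≤ Real.exp (-(2⁻¹ * x)) := by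
      apply Real.exp_le_exp.2
      simp only [Set.mem_Ici] at hx
      linarith
    rcases (hg0 x).eq_or_lt with hzero | hpos
    · have hx0 : g x * Real.exp (-x) * Real.log (S x) = 0 := by rw [← hzero]; ring
      rw [Real.norm_eq_abs, hx0, abs_zero]
      positivity
    · have hhx : 0 < g x * Real.exp (-x) := mul_pos hpos (Real.exp_pos _)
      have hSx : 0 < S x := lt_of_lt_of_le hhx (hgS x)
      have hSa : S x ≤ S 0 := S_anti hx
      rcases le_or_gt 1 (S x) with hS1 | hS1
      · have hlog0 : 0 ≤ Real.log (S x) := Real.log_nonneg hS1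
        have h1 : Real.log (S x) ≤ |Real.log (S 0)| :=
          le_trans (Real.log_le_log hSx hSa) (le_abs_self _)
        rw [Real.norm_eq_abs, abs_of_nonneg (mul_nonneg hhx.le hlog0)]
        have h2 : g x * Real.exp (-x) ≤ C * Real.exp (-x) :=
          mul_le_mul_of_nonneg_right (hgC x) (Real.exp_pos _).le
        calc g x * Real.exp (-x) * Real.log (S x)
            ≤ C * Real.exp (-x) * |Real.log (S 0)| :=
              mul_le_mul h2 h1 hlog0 (by positivity)
          _ ≤ K * Real.exp (-(2⁻¹ * x)) := by
              rw [hKdef]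
              nlinarith [mul_le_mul_of_nonneg_left hexpmono
                (mul_nonneg hC0 (abs_nonneg (Real.log (S 0)))),
                Real.exp_pos (-(2⁻¹ * x)), abs_nonneg (Real.log (S 0))]
      · have hlogneg : Real.log (S x) ≤ 0 := Real.log_nonpos hSx.le hS1.le
        rw [Real.norm_eq_abs,
          abs_of_nonpos (mul_nonpos_of_nonneg_of_nonpos hhx.le hlogneg)]
        have hlb : Real.log (g x * Real.exp (-x)) ≤ Real.log (S x) :=
          Real.log_le_log hhx (hgS x)
        have hlh : Real.log (g x * Real.exp (-x)) = Real.log (g x) - x := by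
          rw [Real.log_mul hpos.ne' (Real.exp_ne_zero _), Real.log_exp]; ring
        have h5 : -Real.log (S x) ≤ x - Real.log (g x) := by linarith
        have key : -(g x * Real.exp (-x) * Real.log (S x)) ≤ Real.exp (-x) * (C * x + 1) := by
          have h6 : -(g x * Real.exp (-x) * Real.log (S x))
              = g x * Real.exp (-x) * (-Real.log (S x)) := by ring
          rw [h6]
          calc g x * Real.exp (-x) * (-Real.log (S x))
              ≤ g x * Real.exp (-x) * (x - Real.log (g x)) :=
                mul_le_mul_of_nonneg_left h5 hhx.le
            _ = Real.exp (-x) * (g x * x - g x * Real.log (g x)) := by ring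
            _ ≤ Real.exp (-x) * (C * x + 1) := by
                have h7 := aux_neg_mul_log (hg0 x)
                have h8 : g x * x ≤ C * x :=
                  mul_le_mul_of_nonneg_right (hgC x) hx
                have h9 : g x * x - g x * Real.log (g x) ≤ C * x + 1 := by linarith
                exact mul_le_mul_of_nonneg_left h9 (Real.exp_pos _).le
        calc -(g x * Real.exp (-x) * Real.log (S x)) ≤ Real.exp (-x) * (C * x + 1) := key
          _ = C * (x * Real.exp (-x)) + Real.exp (-x) := by ring
          _ ≤ C * Real.exp (-(2⁻¹ * x)) + Real.exp (-(2⁻¹ * x)) := by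
              have := mul_le_mul_of_nonneg_left (aux_x_le_exp x hx) hC0
              linarith
          _ ≤ K * Real.exp (-(2⁻¹ * x)) := by
              rw [hKdef]
              nlinarith [mul_nonneg (mul_nonneg hC0 (abs_nonneg (Real.log (S 0))))
                (Real.exp_pos (-(2⁻¹ * x))).le]
  -- the fundamental theorem of calculus part
  have hderiv : ∀ x : ℝ, HasDerivWithinAt (fun y => S y - S y * Real.log (S y))
      (g x * Real.exp (-x) * Real.log (S x)) (Ioi x) x := by
    intro x
    rcases (S_nonneg x).eq_or_lt with hS0 | hSpos
    · have hz : ∀ y ∈ Ici x, S y - S y * Real.log (S y) = (fun _ => (0:ℝ)) y := by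
        intro y hy
        have hy0 : S y = 0 := le_antisymm (hS0 ▸ S_anti hy) (S_nonneg y)
        simp [hy0]
      have hd := (hasDerivWithinAt_const x (Ici x) (0:ℝ)).congr hz (hz x Set.self_mem_Ici)
      have hval : g x * Real.exp (-x) * Real.log (S x) = 0 := by
        rw [← hS0, Real.log_zero, mul_zero]
      rw [hval]
      exact hd.mono Set.Ioi_subset_Ici_self
    · have hconth : ContinuousWithinAt (fun t => g t * Real.exp (-t)) (Ioi x) x := by
        rw [continuousWithinAt_Ioi_iff_Ici]
        exact (hrc x).mul ((Real.continuous_exp.comp continuous_neg).continuousWithinAt)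
      have prim : HasDerivWithinAt (fun u => ∫ t in (x-1)..u, g t * Real.exp (-t))
          (g x * Real.exp (-x)) (Ici x) x :=
        intervalIntegral.integral_hasDerivWithinAt_right (Ih_ab (x-1) x)
          (hh_meas.stronglyMeasurable.stronglyMeasurableAtFilter) hconth
      have heq : ∀ y ∈ Ici x, S y
          = (fun y => S (x-1) - ∫ t in (x-1)..y, g t * Real.exp (-t)) y := by
        intro y hy
        have := S_split (x-1) y (by simp only [Set.mem_Ici] at hy; linarith)
        simp only
        linarith
      have hSderiv : HasDerivWithinAt S (-(g x * Real.exp (-x))) (Ici x) x := by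
        have hd := ((hasDerivWithinAt_const x (Ici x) (S (x-1))).sub prim).congr heq
          (heq x Set.self_mem_Ici)
        simpa using hd
      have hmul : HasDerivWithinAt (fun y => S y * Real.log (S y))
          ((Real.log (S x) + 1) * -(g x * Real.exp (-x))) (Ici x) x :=
        (Real.hasDerivAt_mul_log hSpos.ne').comp_hasDerivWithinAt x hSderiv
      have hd := hSderiv.sub hmul
      have hval : -(g x * Real.exp (-x)) - (Real.log (S x) + 1) * -(g x * Real.exp (-x))
          = g x * Real.exp (-x) * Real.log (S x) := by ring
      rw [hval] at hd
      exact hd.mono Set.Ioi_subset_Ici_self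
  have key : ∀ T : ℝ, 0 ≤ T →
      (∫ y in (0:ℝ)..T, g y * Real.exp (-y) * Real.log (S y))
        ≤ (S T - S T * Real.log (S T)) - (S 0 - S 0 * Real.log (S 0)) := by
    intro T hT
    refine intervalIntegral.integral_le_sub_of_hasDeriv_right_of_le hT
      ((S_cont.sub (Real.continuous_mul_log.comp S_cont)).continuousOn)
      (fun y _ => hderiv y) (Iphi.mono_set (Icc_subset_Ici_self)) (fun y _ => le_rfl)
  -- limits as T → ∞
  have L1 : Tendsto (fun T => ∫ y in (0:ℝ)..T, g y * Real.exp (-y) * Real.log (S y)) atTop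
      (𝓝 (∫ y in Ioi (0:ℝ), g y * Real.exp (-y) * Real.log (S y))) :=
    intervalIntegral_tendsto_integral_Ioi 0 (Iphi.mono_set Set.Ioi_subset_Ici_self) tendsto_id
  have L2 : Tendsto S atTop (𝓝 0) := by
    have l2a := intervalIntegral_tendsto_integral_Ioi 0 (I_h 0) tendsto_id
    have l2b : Tendsto (fun T => S 0 - ∫ y in (0:ℝ)..T, g y * Real.exp (-y)) atTop
        (𝓝 (S 0 - S 0)) := tendsto_const_nhds.sub l2a
    rw [sub_self] at l2b
    refine Filter.Tendsto.congr' ?_ l2b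
    filter_upwards [eventually_ge_atTop (0:ℝ)] with T hT
    have := S_split 0 T hT
    linarith
  have L3 : Tendsto (fun T => (S T - S T * Real.log (S T)) - (S 0 - S 0 * Real.log (S 0)))
      atTop (𝓝 (0 - (S 0 - S 0 * Real.log (S 0)))) := by
    have h1 : Tendsto (fun T => S T - S T * Real.log (S T)) atTop (𝓝 0) := by
      have h2 := (Real.continuous_mul_log.tendsto 0).comp L2
      have h3 := L2.sub h2
      simpa using h3
    exact h1.sub tendsto_const_nhds
  have Dfinal : (∫ y in Ioi (0:ℝ), g y * Real.exp (-y) * Real.log (S y))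
      ≤ S 0 * Real.log (S 0) - S 0 := by
    have := le_of_tendsto_of_tendsto L1 L3 ((eventually_ge_atTop (0:ℝ)).mono key)
    linarith
  -- pointwise comparison and assembly
  have P : ∀ y ∈ Ioi (0:ℝ), g y * Real.exp (-y) * Real.log (g y)
      ≤ g y * Real.exp (-y) * y + g y * Real.exp (-y) * Real.log (S y) := by
    intro y _
    rcases (hg0 y).eq_or_lt with h0 | hpos
    · rw [← h0]; simp
    · have h1 : Real.log (g y * Real.exp (-y)) ≤ Real.log (S y) :=
        Real.log_le_log (mul_pos hpos (Real.exp_pos _)) (hgS y)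
      rw [Real.log_mul hpos.ne' (Real.exp_ne_zero _), Real.log_exp] at h1
      have hle : Real.log (g y) ≤ y + Real.log (S y) := by linarith
      calc g y * Real.exp (-y) * Real.log (g y)
          ≤ g y * Real.exp (-y) * (y + Real.log (S y)) :=
            mul_le_mul_of_nonneg_left hle (hh0 y)
        _ = g y * Real.exp (-y) * y + g y * Real.exp (-y) * Real.log (S y) := by ring
  have Pmono : (∫ y in Ioi (0:ℝ), g y * Real.exp (-y) * Real.log (g y))
      ≤ ∫ y in Ioi (0:ℝ), (g y * Real.exp (-y) * y + g y * Real.exp (-y) * Real.log (S y)) :=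
    setIntegral_mono_on (Ihlg.mono_set Set.Ioi_subset_Ici_self)
      (IntegrableOn.mono_set (Ihx.add Iphi) Set.Ioi_subset_Ici_self) measurableSet_Ioi P
  have Isum : (∫ y in Ioi (0:ℝ), (g y * Real.exp (-y) * y + g y * Real.exp (-y) * Real.log (S y)))
      = (∫ y in Ioi (0:ℝ), g y * Real.exp (-y) * y)
        + ∫ y in Ioi (0:ℝ), g y * Real.exp (-y) * Real.log (S y) :=
    integral_add (Ihx.mono_set Set.Ioi_subset_Ici_self) (Iphi.mono_set Set.Ioi_subset_Ici_self)
  have e1 : (∫ y in Ioi (0:ℝ), g y * Real.exp (-y) * (y - 1))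
      = (∫ y in Ioi (0:ℝ), g y * Real.exp (-y) * y) - S 0 := by
    have hfun : (fun y => g y * Real.exp (-y) * (y - 1))
        = fun y => g y * Real.exp (-y) * y - g y * Real.exp (-y) := by
      funext y; ring
    rw [hfun, integral_sub (Ihx.mono_set Set.Ioi_subset_Ici_self)
      (Ihc.mono_set Set.Ioi_subset_Ici_self)]
  have hS0eq : (∫ y in Ioi (0:ℝ), g y * Real.exp (-y)) = S 0 := rfl
  rw [hS0eq, e1]
  linarith

end Aux

section Main

open Filter Function Topology
open scoped NNReal ENNReal

/-- One-dimensional entropy inequality for the exponential measure on `ℝ₊` with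
density `x ↦ e^(-x)`: for a bounded non-decreasing `f : ℝ₊ → ℝ₊`,
`Ent_μ f ≤ ∫ f(x)·(x - 1) dμ(x)`. -/
theorem entropy_le_integral_exponential_radial
    (μ : Measure ℝ)
    (hμ : μ = (volume.restrict (Set.Ici (0 : ℝ))).withDensity
      fun x => ENNReal.ofReal (Real.exp (-x)))
    (f : ℝ → ℝ)
    (hf_nonneg : ∀ x ∈ Set.Ici (0 : ℝ), 0 ≤ f x)
    (hf_mono : MonotoneOn f (Set.Ici (0 : ℝ)))
    (hf_bdd : ∃ C : ℝ, ∀ x ∈ Set.Ici (0 : ℝ), f x ≤ C) :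
    entropy μ f ≤ ∫ x, f x * (x - 1) ∂μ := by
  subst hμ
  obtain ⟨C, hC⟩ := hf_bdd
  set g₀ : ℝ → ℝ := fun x => f (max x 0) with hg₀def
  have hg₀mono : Monotone g₀ := fun x y hxy =>
    hf_mono (le_max_right x 0) (le_max_right y 0) (max_le_max hxy le_rfl)
  set g : ℝ → ℝ := Function.rightLim g₀ with hgdef
  have hgmono : Monotone g := hg₀mono.rightLim
  have hg0 : ∀ x, 0 ≤ g x := fun x =>
    le_trans (hf_nonneg _ (le_max_right x 0)) (hg₀mono.le_rightLim le_rfl)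
  have hgC : ∀ x, g x ≤ C := fun x =>
    le_trans (hg₀mono.rightLim_le (lt_add_one x)) (hC _ (Set.mem_Ici.2 (le_max_right _ 0)))
  -- right-continuity of g
  have hrc : ∀ x, ContinuousWithinAt g (Set.Ici x) x := by
    intro x
    rw [← continuousWithinAt_Ioi_iff_Ici]
    have : Tendsto g (𝓝[>] x) (𝓝 (g x)) := by
      refine tendsto_order.2 ⟨fun b hb => ?_, fun b hb => ?_⟩
      · filter_upwards [self_mem_nhdsWithin] with z hz
        exact lt_of_lt_of_le hb (hgmono (le_of_lt hz))
      · have hgx : Tendsto g₀ (𝓝[>] x) (𝓝 (g x)) := hg₀mono.tendsto_rightLim x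
        have hev := hgx.eventually_lt_const hb
        obtain ⟨y, hy1, hy2⟩ := (hev.and self_mem_nhdsWithin).exists
        filter_upwards [Ioo_mem_nhdsGT_of_mem (⟨le_refl x, hy2⟩ : x ∈ Ico x y)] with z hz
        exact lt_of_le_of_lt (hg₀mono.rightLim_le hz.2) hy1
    exact this
  -- a.e. equality of f and g
  have hfg : f =ᵐ[(volume.restrict (Set.Ici (0:ℝ))).withDensity
      fun x => ENNReal.ofReal (Real.exp (-x))] g := by
    have hsub : {x | f x ≠ g x} ∩ Ici 0 ⊆ {x | ¬ContinuousAt g₀ x} := by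
      rintro x ⟨hne, hx⟩ hcont
      apply hne
      have h1 : g x = g₀ x := by
        rw [hgdef]
        exact rightLim_eq_of_tendsto
          (hcont.continuousWithinAt)
      have h2 : f x = g₀ x := by rw [hg₀def]; simp [max_eq_left (Set.mem_Ici.1 hx)]
      rw [h2, h1]
    have hnull : volume.restrict (Set.Ici (0:ℝ)) {x | f x ≠ g x} = 0 := by
      rw [Measure.restrict_apply' measurableSet_Ici]
      exact measure_mono_null hsub (hg₀mono.countable_not_continuousAt.measure_zero volume)
    have hae : f =ᵐ[volume.restrict (Set.Ici (0:ℝ))] g := by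
      rw [Filter.EventuallyEq, ae_iff]
      exact hnull
    exact hae.filter_mono (withDensity_absolutelyContinuous _ _).ae_le
  -- conversion of integrals
  have hconv : ∀ ψ : ℝ → ℝ,
      (∫ x, ψ x ∂((volume.restrict (Set.Ici (0:ℝ))).withDensity
        fun x => ENNReal.ofReal (Real.exp (-x))))
      = ∫ x in Ioi (0:ℝ), ψ x * Real.exp (-x) := by
    intro ψ
    rw [show (fun x : ℝ => ENNReal.ofReal (Real.exp (-x)))
      = (fun x : ℝ => ((Real.toNNReal (Real.exp (-x)) : ℝ≥0) : ℝ≥0∞)) from rfl]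
    rw [integral_withDensity_eq_integral_smul
      (f := fun x : ℝ => (Real.exp (-x)).toNNReal)
      ((Real.measurable_exp.comp measurable_neg).real_toNNReal) ψ]
    rw [← integral_Ici_eq_integral_Ioi]
    refine integral_congr_ae (Filter.Eventually.of_forall fun x => ?_)
    simp [NNReal.smul_def, Real.coe_toNNReal _ (Real.exp_pos (-x)).le, mul_comm]
  have h1 : (∫ x, f x * Real.log (f x) ∂((volume.restrict (Set.Ici (0:ℝ))).withDensity
      fun x => ENNReal.ofReal (Real.exp (-x))))
      = ∫ x in Ioi (0:ℝ), g x * Real.exp (-x) * Real.log (g x) := by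
    rw [integral_congr_ae (hfg.mono fun x hx => by rw [hx])]
    rw [hconv (fun x => g x * Real.log (g x))]
    exact integral_congr_ae (Filter.Eventually.of_forall fun x => by ring)
  have h2 : (∫ x, f x ∂((volume.restrict (Set.Ici (0:ℝ))).withDensity
      fun x => ENNReal.ofReal (Real.exp (-x))))
      = ∫ x in Ioi (0:ℝ), g x * Real.exp (-x) := by
    rw [integral_congr_ae hfg, hconv g]
  have h3 : (∫ x, f x * (x - 1) ∂((volume.restrict (Set.Ici (0:ℝ))).withDensity
      fun x => ENNReal.ofReal (Real.exp (-x))))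
      = ∫ x in Ioi (0:ℝ), g x * Real.exp (-x) * (x - 1) := by
    rw [integral_congr_ae (hfg.mono fun x hx => by rw [hx])]
    rw [hconv (fun x => g x * (x - 1))]
    exact integral_congr_ae (Filter.Eventually.of_forall fun x => by ring)
  rw [entropy, h1, h2, h3]
  have := core_ineq g hgmono hg0 hgC hrc
  linarith

end Main
end
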